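/- arXiv:2205.06665 — 4 statements merged into one kernel-verified Lean document; each statement's English description precedes it below -/
import Mathlib

section
/- Operational correspondence between the KAM and its HOcore translation: (Forward) if C ->* C' in the KAM, then [[C]] ==tau==> [[C']]. (Backward) if [[C]] ==tau==> P, then there exists a KAM configuration C' such that C ->* C' and one of the following holds: (a) P = [[C']]; or (b) there exists P' with P --tau--> P' and P' = [[C']]; or (c) C' = <\x.t | []> for some x, t and P = hd(x).[[t]] || b!<0>. -/
/-! ### HOcore: syntax, LTS, barbs, barbed bisimilarity -/

/-- Channel names of HOcore. -/
abbrev Name := ℕ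

/-- HOcore processes, with de Bruijn indices for process variables. -/
inductive Proc : Type
  | nil : Proc
  | pvar : ℕ → Proc
  | par : Proc → Proc → Proc
  | inp : Name → Proc → Proc
  | out : Name → Proc → Proc
  deriving DecidableEq

namespace Proc

/-- Shift the free de Bruijn indices `≥ k` by `d`. -/
def lift (d : ℕ) : ℕ → Proc → Proc
  | _, nil => nil
  | k, pvar n => if n < k then pvar n else pvar (n + d)
  | k, par P Q => par (lift d k P) (lift d k Q)
  | k, inp a P => inp a (lift d (k + 1) P)
  | k, out a P => out a (lift d k P)

/-- Capture-avoiding substitution of `S` for the de Bruijn index `k` in `P`. -/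
def subst : Proc → ℕ → Proc → Proc
  | nil, _, _ => nil
  | pvar n, k, S => if n = k then lift k 0 S else if k < n then pvar (n - 1) else pvar n
  | par P Q, k, S => par (subst P k S) (subst Q k S)
  | inp a P, k, S => inp a (subst P (k + 1) S)
  | out a P, k, S => out a (subst P k S)

/-- Free channel names of a process. -/
def fnames : Proc → Finset Name
  | nil => ∅
  | pvar _ => ∅
  | par P Q => fnames P ∪ fnames Q
  | inp a P => insert a (fnames P)
  | out a P => insert a (fnames P)

end Proc

/-- Labels of the HOcore LTS: internal step, output, input. -/
inductive Label
  | tau : Label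
  | outl : Name → Proc → Label
  | inl : Name → Proc → Label

/-- Structural congruence: parallel composition is associative, commutative,
and has `nil` as a neutral element. -/
inductive SCong : Proc → Proc → Prop
  | refl (P) : SCong P P
  | symm {P Q} : SCong P Q → SCong Q P
  | trans {P Q R} : SCong P Q → SCong Q R → SCong P R
  | parComm (P Q) : SCong (.par P Q) (.par Q P)
  | parAssoc (P Q R) : SCong (.par (.par P Q) R) (.par P (.par Q R))
  | parNil (P) : SCong (.par P .nil) P
  | parCong {P P' Q Q'} : SCong P P' → SCong Q Q' → SCong (.par P Q) (.par P' Q')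
  | inpCong {P P'} (a) : SCong P P' → SCong (.inp a P) (.inp a P')
  | outCong {P P'} (a) : SCong P P' → SCong (.out a P) (.out a P')

/-- The labeled transition system of HOcore (processes are considered up to
structural congruence). -/
inductive Step : Proc → Label → Proc → Prop
  | outS (a P) : Step (.out a P) (.outl a P) .nil
  | inpS (a Q P) : Step (.inp a Q) (.inl a P) (Q.subst 0 P)
  | parL {P l P'} (Q) : Step P l P' → Step (.par P Q) l (.par P' Q)
  | parR {Q l Q'} (P) : Step Q l Q' → Step (.par P Q) l (.par P Q')
  | comm1 {P Q P' Q' a R} : Step P (.outl a R) P' → Step Q (.inl a R) Q' →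
      Step (.par P Q) .tau (.par P' Q')
  | comm2 {P Q P' Q' a R} : Step P (.inl a R) P' → Step Q (.outl a R) Q' →
      Step (.par P Q) .tau (.par P' Q')
  | struct {P P' l Q Q'} : SCong P P' → Step P' l Q' → SCong Q' Q → Step P l Q

/-- One internal step. -/
def TauStep (P Q : Proc) : Prop := Step P Label.tau Q

/-- Weak internal transition `==tau==>`. -/
def WTau : Proc → Proc → Prop := Relation.ReflTransGen TauStep

/-- Observables: input on a name, or output on a name (a coname). -/
inductive Barb
  | inb : Name → Barb
  | outb : Name → Barb
  deriving DecidableEq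

/-- Strong observable action w.r.t. a set `H` of hidden names. -/
def StrongBarb (H : Set Name) (P : Proc) : Barb → Prop
  | .inb a => a ∉ H ∧ ∃ Q R, Step P (Label.inl a Q) R
  | .outb a => a ∉ H ∧ ∃ Q R, Step P (Label.outl a Q) R

/-- Weak observable action w.r.t. a set `H` of hidden names. -/
def WeakBarb (H : Set Name) (P : Proc) (α : Barb) : Prop :=
  ∃ P', WTau P P' ∧ StrongBarb H P' α

/-- Barbed bisimulation w.r.t. the hidden names `H`. -/
def IsBarbedBisim (H : Set Name) (R : Proc → Proc → Prop) : Prop :=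
  Symmetric R ∧ ∀ P Q, R P Q →
    (∀ α, StrongBarb H P α → WeakBarb H Q α) ∧
    (∀ S : Proc, ((S.fnames : Set Name) ∩ H = ∅) → R (.par P S) (.par Q S)) ∧
    (∀ P', Step P Label.tau P' → ∃ Q', WTau Q Q' ∧ R P' Q')

/-- Barbed equivalence w.r.t. the hidden names `H`. -/
def BarbedEquiv (H : Set Name) (P Q : Proc) : Prop :=
  ∃ R, IsBarbedBisim H R ∧ R P Q
/-! ### Closed call-by-name lambda-calculus and the KAM -/

/-- Lambda-terms with de Bruijn indices. -/
inductive Tm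
  | bvar : ℕ → Tm
  | lam : Tm → Tm
  | app : Tm → Tm → Tm
  deriving DecidableEq

namespace Tm

/-- Shift the free de Bruijn indices `≥ k` by `d`. -/
def liftT (d : ℕ) : ℕ → Tm → Tm
  | k, bvar n => if n < k then bvar n else bvar (n + d)
  | k, lam t => lam (liftT d (k + 1) t)
  | k, app t s => app (liftT d k t) (liftT d k s)

/-- Capture-avoiding substitution of `s` for the de Bruijn index `k`. -/
def substT : Tm → ℕ → Tm → Tm
  | bvar n, k, s => if n = k then liftT k 0 s else if k < n then bvar (n - 1) else bvar n
  | lam t, k, s => lam (substT t (k + 1) s)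
  | app t u, k, s => app (substT t k s) (substT u k s)

/-- All de Bruijn indices point to one of the `k` enclosing binders. -/
def ClosedUnder : ℕ → Tm → Prop
  | k, bvar n => n < k
  | k, lam t => ClosedUnder (k + 1) t
  | k, app t s => ClosedUnder k t ∧ ClosedUnder k s

/-- Closed terms. -/
def Closed (t : Tm) : Prop := ClosedUnder 0 t

end Tm

/-- Stacks of the KAM. -/
inductive Stk
  | nil : Stk
  | cons : Tm → Stk → Stk

/-- Configurations of the KAM. -/
structure KConf where
  t : Tm
  π : Stk

/-- Transitions of the KAM. -/
inductive KStep : KConf → KConf → Prop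
  | push {t s π} : KStep ⟨.app t s, π⟩ ⟨t, .cons s π⟩
  | grab {t s π} : KStep ⟨.lam t, .cons s π⟩ ⟨t.substT 0 s, π⟩

/-- Reflexive-transitive closure of the KAM transitions. -/
def KSteps : KConf → KConf → Prop := Relation.ReflTransGen KStep

def StkClosed : Stk → Prop
  | .nil => True
  | .cons t π => t.Closed ∧ StkClosed π

/-- A KAM configuration evaluating a closed term within a stack of closed terms. -/
def KConfClosed (C : KConf) : Prop := C.t.Closed ∧ StkClosed C.π
/-! ### Translation of the KAM into HOcore -/

def hdN : Name := 0
def cN : Name := 1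
def bN : Name := 2

/-- Translation of lambda-terms into HOcore. -/
def trT : Tm → Proc
  | .bvar n => .pvar n
  | .app t s =>
      .inp cN (.par ((trT t).lift 1 0)
        (.out cN (.par (.out hdN ((trT s).lift 1 0)) (.out cN (.pvar 0)))))
  | .lam t => .inp cN (.par (.inp hdN ((trT t).lift 1 1)) (.pvar 0))

/-- Translation of KAM stacks. -/
def trStk : Stk → Proc
  | .nil => .out bN .nil
  | .cons t π => .par (.out hdN (trT t)) (.out cN (trStk π))

/-- Translation of KAM configurations. -/
def trConf (C : KConf) : Proc := .par (trT C.t) (.out cN (trStk C.π))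

/-! ### Statement 0: operational correspondence between the KAM and HOcore -/

/-! ### Auxiliary lemmas -/

namespace Proc

theorem lift_zero : ∀ (P : Proc) (k : ℕ), lift 0 k P = P
  | nil, _ => rfl
  | pvar n, k => by simp [lift]
  | par P Q, k => by simp [lift, lift_zero P, lift_zero Q]
  | inp a P, k => by simp [lift, lift_zero P]
  | out a P, k => by simp [lift, lift_zero P]

theorem lift_lift_le : ∀ (P : Proc) (d k k' j : ℕ), j ≤ k' → k' ≤ k + j →
    lift d k' (lift k j P) = lift (k + d) j P
  | nil, _, _, _, _, _, _ => rfl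
  | pvar n, d, k, k', j, h1, h2 => by
      by_cases hn : n < j
      · have h3 : n < k' := by omega
        simp [lift, hn, h3]
      · have h3 : ¬ n + k < k' := by omega
        simp only [lift, if_neg hn, if_neg h3]
        congr 1; omega
  | par P Q, d, k, k', j, h1, h2 => by
      simp [lift, lift_lift_le P d k k' j h1 h2, lift_lift_le Q d k k' j h1 h2]
  | inp a P, d, k, k', j, h1, h2 => by
      simp [lift, lift_lift_le P d k (k'+1) (j+1) (by omega) (by omega)]
  | out a P, d, k, k', j, h1, h2 => by
      simp [lift, lift_lift_le P d k k' j h1 h2]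

theorem lift_lift_comm : ∀ (P : Proc) (d d' k k' : ℕ), k' ≤ k →
    lift d (k + d') (lift d' k' P) = lift d' k' (lift d k P)
  | nil, _, _, _, _, _ => rfl
  | pvar n, d, d', k, k', h => by
      by_cases h1 : n < k'
      · have h2 : n < k := by omega
        have h3 : n < k + d' := by omega
        simp [lift, h1, h2, h3]
      · by_cases h2 : n < k
        · have h3 : n + d' < k + d' := by omega
          simp [lift, h1, h2, h3]
        · have h3 : ¬ n + d' < k + d' := by omega
          have h4 : ¬ n + d < k' := by omega
          simp only [lift, if_neg h1, if_neg h2, if_neg h3, if_neg h4]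
          congr 1; omega
  | par P Q, d, d', k, k', h => by
      simp [lift, lift_lift_comm P d d' k k' h, lift_lift_comm Q d d' k k' h]
  | inp a P, d, d', k, k', h => by
      have := lift_lift_comm P d d' (k+1) (k'+1) (by omega)
      simp only [lift]
      rw [show k + d' + 1 = (k+1) + d' by omega, this]
  | out a P, d, d', k, k', h => by
      simp [lift, lift_lift_comm P d d' k k' h]

theorem subst_lift_cancel : ∀ (P : Proc) (k : ℕ) (S : Proc), (lift 1 k P).subst k S = P
  | nil, _, _ => rfl
  | pvar n, k, S => by
      by_cases h1 : n < k
      · have h2 : ¬ n = k := by omega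
        have h3 : ¬ k < n := by omega
        simp [lift, subst, h1, h2, h3]
      · have h2 : ¬ n + 1 = k := by omega
        have h3 : k < n + 1 := by omega
        simp only [lift, subst, if_neg h1, if_neg h2, if_pos h3]
        congr 1
  | par P Q, k, S => by simp [lift, subst, subst_lift_cancel P k S, subst_lift_cancel Q k S]
  | inp a P, k, S => by simp [lift, subst, subst_lift_cancel P (k+1) S]
  | out a P, k, S => by simp [lift, subst, subst_lift_cancel P k S]

theorem lift_subst : ∀ (P : Proc) (d k k' : ℕ) (S : Proc), k' ≤ k →
    (lift d k' P).subst (k + d) S = lift d k' (P.subst k S)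
  | nil, _, _, _, _, _ => rfl
  | pvar n, d, k, k', S, h => by
      by_cases h1 : n < k'
      · have h2 : ¬ n = k + d := by omega
        have h3 : ¬ k + d < n := by omega
        have h4 : ¬ n = k := by omega
        have h5 : ¬ k < n := by omega
        simp [lift, subst, h1, h2, h3, h4, h5]
      · by_cases h2 : n = k
        · subst h2
          simp only [lift, if_neg h1, subst, if_pos rfl, if_true]
          exact (lift_lift_le S d n k' 0 (Nat.zero_le _) (by omega)).symm
        · by_cases h3 : k < n
          · have h4 : ¬ n + d = k + d := by omega
            have h5 : k + d < n + d := by omega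
            have h6 : ¬ n - 1 < k' := by omega
            simp only [lift, subst, if_neg h1, if_neg h4, if_pos h5, if_neg h2, if_pos h3, if_neg h6]
            congr 1; omega
          · have h4 : ¬ n + d = k + d := by omega
            have h5 : ¬ k + d < n + d := by omega
            simp [lift, subst, h1, h2, h3, h4, h5]
  | par P Q, d, k, k', S, h => by
      simp [lift, subst, lift_subst P d k k' S h, lift_subst Q d k k' S h]
  | inp a P, d, k, k', S, h => by
      have := lift_subst P d (k+1) (k'+1) S (by omega)
      simp only [lift, subst]
      rw [show k + d + 1 = (k+1) + d by omega, this]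
  | out a P, d, k, k', S, h => by
      simp [lift, subst, lift_subst P d k k' S h]

theorem subst_pvar_self (k : ℕ) (S : Proc) : (pvar k).subst k S = lift k 0 S := by
  simp [subst]

end Proc
theorem SCong.lift {P Q : Proc} (h : SCong P Q) : ∀ d k, SCong (P.lift d k) (Q.lift d k) := by
  induction h with
  | refl P => exact fun d k => SCong.refl _
  | symm _ ih => exact fun d k => (ih d k).symm
  | trans _ _ ih1 ih2 => exact fun d k => (ih1 d k).trans (ih2 d k)
  | parComm P Q => exact fun d k => by simpa [Proc.lift] using SCong.parComm _ _
  | parAssoc P Q R => exact fun d k => by simpa [Proc.lift] using SCong.parAssoc _ _ _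
  | parNil P => exact fun d k => by simpa [Proc.lift] using SCong.parNil _
  | parCong _ _ ih1 ih2 =>
      intro d k; simpa [Proc.lift] using SCong.parCong (ih1 d k) (ih2 d k)
  | inpCong a _ ih =>
      intro d k; simpa [Proc.lift] using SCong.inpCong a (ih d (k+1))
  | outCong a _ ih =>
      intro d k; simpa [Proc.lift] using SCong.outCong a (ih d k)

theorem SCong.substL {P Q : Proc} (h : SCong P Q) : ∀ k S, SCong (P.subst k S) (Q.subst k S) := by
  induction h with
  | refl P => exact fun k S => SCong.refl _
  | symm _ ih => exact fun k S => (ih k S).symm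
  | trans _ _ ih1 ih2 => exact fun k S => (ih1 k S).trans (ih2 k S)
  | parComm P Q => exact fun k S => by simpa [Proc.subst] using SCong.parComm _ _
  | parAssoc P Q R => exact fun k S => by simpa [Proc.subst] using SCong.parAssoc _ _ _
  | parNil P => exact fun k S => by simpa [Proc.subst] using SCong.parNil _
  | parCong _ _ ih1 ih2 =>
      intro k S; simpa [Proc.subst] using SCong.parCong (ih1 k S) (ih2 k S)
  | inpCong a _ ih =>
      intro k S; simpa [Proc.subst] using SCong.inpCong a (ih (k+1) S)
  | outCong a _ ih =>
      intro k S; simpa [Proc.subst] using SCong.outCong a (ih k S)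

theorem SCong.substR : ∀ (P : Proc) (k : ℕ) {S S' : Proc}, SCong S S' →
    SCong (P.subst k S) (P.subst k S')
  | .nil, _, _, _, _ => SCong.refl _
  | .pvar n, k, S, S', h => by
      by_cases h1 : n = k
      · subst h1; simpa [Proc.subst] using h.lift n 0
      · by_cases h2 : k < n <;> simp [Proc.subst, h1, h2] <;> exact SCong.refl _
  | .par P Q, k, S, S', h => by
      simpa [Proc.subst] using SCong.parCong (SCong.substR P k h) (SCong.substR Q k h)
  | .inp a P, k, S, S', h => by
      simpa [Proc.subst] using SCong.inpCong a (SCong.substR P (k+1) h)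
  | .out a P, k, S, S', h => by
      simpa [Proc.subst] using SCong.outCong a (SCong.substR P k h)

/-! ### Translation commutes with lift and subst -/

theorem trT_lift : ∀ (t : Tm) (d k : ℕ), trT (t.liftT d k) = (trT t).lift d k
  | .bvar n, d, k => by
      by_cases h : n < k <;> simp [Tm.liftT, trT, Proc.lift, h]
  | .app t s, d, k => by
      simp only [Tm.liftT, trT, Proc.lift, trT_lift t d k, trT_lift s d k]
      rw [show k + 1 = k + 1 by rfl]
      rw [Proc.lift_lift_comm (trT t) d 1 k 0 (Nat.zero_le _),
          Proc.lift_lift_comm (trT s) d 1 k 0 (Nat.zero_le _)]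
      simp [Proc.lift]
  | .lam t, d, k => by
      simp only [Tm.liftT, trT, Proc.lift, trT_lift t d (k+1)]
      rw [show k + 1 + 1 = (k+1) + 1 by rfl,
          Proc.lift_lift_comm (trT t) d 1 (k+1) 1 (by omega)]
      simp [Proc.lift]

theorem trT_subst : ∀ (t : Tm) (k : ℕ) (s : Tm),
    trT (t.substT k s) = (trT t).subst k (trT s)
  | .bvar n, k, s => by
      by_cases h1 : n = k
      · subst h1; simp [Tm.substT, trT, Proc.subst, trT_lift]
      · by_cases h2 : k < n <;> simp [Tm.substT, trT, Proc.subst, h1, h2]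
  | .app t u, k, s => by
      simp only [Tm.substT, trT, Proc.subst, trT_subst t k s, trT_subst u k s]
      rw [show k + 1 = k + 1 by rfl,
          Proc.lift_subst (trT t) 1 k 0 (trT s) (Nat.zero_le _),
          Proc.lift_subst (trT u) 1 k 0 (trT s) (Nat.zero_le _)]
      simp [Proc.subst]
  | .lam t, k, s => by
      simp only [Tm.substT, trT, Proc.subst, trT_subst t (k+1) s]
      rw [show k + 1 + 1 = (k+1) + 1 by rfl,
          Proc.lift_subst (trT t) 1 (k+1) 1 (trT s) (by omega)]
      simp [Proc.subst]

/-! ### Closedness lemmas -/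

theorem Tm.closedUnder_mono : ∀ (t : Tm) (i k : ℕ), i ≤ k → t.ClosedUnder i → t.ClosedUnder k
  | .bvar n, i, k, h, hc => by simp [Tm.ClosedUnder] at *; omega
  | .lam t, i, k, h, hc => Tm.closedUnder_mono t (i+1) (k+1) (by omega) hc
  | .app t s, i, k, h, hc => ⟨Tm.closedUnder_mono t i k h hc.1, Tm.closedUnder_mono s i k h hc.2⟩

theorem Tm.liftT_closed_id : ∀ (t : Tm) (d i k : ℕ), t.ClosedUnder i → i ≤ k → t.liftT d k = t
  | .bvar n, d, i, k, hc, h => by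
      simp [Tm.ClosedUnder] at hc; simp [Tm.liftT, show n < k by omega]
  | .lam t, d, i, k, hc, h => by
      simp [Tm.liftT, Tm.liftT_closed_id t d (i+1) (k+1) hc (by omega)]
  | .app t s, d, i, k, hc, h => by
      simp [Tm.liftT, Tm.liftT_closed_id t d i k hc.1 h, Tm.liftT_closed_id s d i k hc.2 h]

theorem Tm.substT_closed : ∀ (t : Tm) (k : ℕ) (s : Tm), t.ClosedUnder (k+1) → s.Closed →
    (t.substT k s).ClosedUnder k
  | .bvar n, k, s, hc, hs => by
      simp [Tm.ClosedUnder] at hc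
      by_cases h1 : n = k
      · subst h1
        simp [Tm.substT]
        rw [Tm.liftT_closed_id s n 0 0 hs (le_refl _)]
        exact Tm.closedUnder_mono s 0 n (Nat.zero_le _) hs
      · have h2 : ¬ k < n := by omega
        simp [Tm.substT, h1, h2, Tm.ClosedUnder]; omega
  | .lam t, k, s, hc, hs => Tm.substT_closed t (k+1) s hc hs
  | .app t u, k, s, hc, hs => ⟨Tm.substT_closed t k s hc.1 hs, Tm.substT_closed u k s hc.2 hs⟩

theorem trT_lift_closed {t : Tm} {k : ℕ} (h : t.ClosedUnder k) (d : ℕ) :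
    (trT t).lift d k = trT t := by
  rw [← trT_lift, Tm.liftT_closed_id t d k k h (le_refl _)]
/-! ### A structural LTS without the struct rule -/

inductive SStep : Proc → Label → Proc → Prop
  | outS (a P) : SStep (.out a P) (.outl a P) .nil
  | inpS (a Q P) : SStep (.inp a Q) (.inl a P) (Q.subst 0 P)
  | parL {P l P'} (Q) : SStep P l P' → SStep (.par P Q) l (.par P' Q)
  | parR {Q l Q'} (P) : SStep Q l Q' → SStep (.par P Q) l (.par P Q')
  | comm1 {P Q P' Q' a R} : SStep P (.outl a R) P' → SStep Q (.inl a R) Q' →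
      SStep (.par P Q) .tau (.par P' Q')
  | comm2 {P Q P' Q' a R} : SStep P (.inl a R) P' → SStep Q (.outl a R) Q' →
      SStep (.par P Q) .tau (.par P' Q')

theorem sstep_to_step {P l Q} (h : SStep P l Q) : Step P l Q := by
  induction h with
  | outS a P => exact Step.outS a P
  | inpS a Q P => exact Step.inpS a Q P
  | parL Q _ ih => exact Step.parL Q ih
  | parR P _ ih => exact Step.parR P ih
  | comm1 _ _ ih1 ih2 => exact Step.comm1 ih1 ih2
  | comm2 _ _ ih1 ih2 => exact Step.comm2 ih1 ih2

/-- Congruence of labels: equality up to `SCong` on the carried process. -/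
inductive LCong : Label → Label → Prop
  | tau : LCong .tau .tau
  | outl (a) {P Q} : SCong P Q → LCong (.outl a P) (.outl a Q)
  | inl (a) {P Q} : SCong P Q → LCong (.inl a P) (.inl a Q)

theorem LCong.refl : ∀ l, LCong l l
  | .tau => .tau
  | .outl a P => .outl a (SCong.refl P)
  | .inl a P => .inl a (SCong.refl P)

theorem LCong.symm' : ∀ {l l'}, LCong l l' → LCong l' l
  | _, _, .tau => .tau
  | _, _, .outl a h => .outl a h.symm
  | _, _, .inl a h => .inl a h.symm

theorem LCong.trans' : ∀ {l l' l''}, LCong l l' → LCong l' l'' → LCong l l''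
  | _, _, _, .tau, .tau => .tau
  | _, _, _, .outl a h, .outl _ h' => .outl a (h.trans h')
  | _, _, _, .inl a h, .inl _ h' => .inl a (h.trans h')

/-- Inputs can absorb structurally congruent messages. -/
theorem inl_flex_aux : ∀ {P l P'}, SStep P l P' → ∀ {a R R'}, l = .inl a R → SCong R R' →
    ∃ P'', SStep P (.inl a R') P'' ∧ SCong P' P'' := by
  intro P l P' h
  induction h with
  | outS a P => intro _ _ _ h; cases h
  | inpS a Q P =>
      intro a' R R' hl hR
      cases hl
      exact ⟨Q.subst 0 R', SStep.inpS _ Q R', SCong.substR Q 0 hR⟩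
  | parL Q _ ih =>
      intro a R R' hl hR
      obtain ⟨P'', h1, h2⟩ := ih hl hR
      exact ⟨.par P'' Q, SStep.parL Q h1, SCong.parCong h2 (SCong.refl Q)⟩
  | parR P _ ih =>
      intro a R R' hl hR
      obtain ⟨Q'', h1, h2⟩ := ih hl hR
      exact ⟨.par P Q'', SStep.parR P h1, SCong.parCong (SCong.refl P) h2⟩
  | comm1 _ _ _ _ => intro _ _ _ h; cases h
  | comm2 _ _ _ _ => intro _ _ _ h; cases h

theorem inl_flex {P a R P'} (h : SStep P (.inl a R) P') {R'} (hR : SCong R R') :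
    ∃ P'', SStep P (.inl a R') P'' ∧ SCong P' P'' :=
  inl_flex_aux h rfl hR

/-- Structural congruence is a strong bisimulation for the structural LTS. -/
theorem scong_bisim {P Q : Proc} (h : SCong P Q) :
    (∀ l Q', SStep Q l Q' → ∃ l' P', LCong l l' ∧ SStep P l' P' ∧ SCong P' Q') ∧
    (∀ l P', SStep P l P' → ∃ l' Q', LCong l l' ∧ SStep Q l' Q' ∧ SCong Q' P') := by
  induction h with
  | refl P =>
      exact ⟨fun l Q' h => ⟨l, Q', LCong.refl l, h, SCong.refl _⟩,
             fun l P' h => ⟨l, P', LCong.refl l, h, SCong.refl _⟩⟩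
  | symm _ ih => exact ⟨ih.2, ih.1⟩
  | trans _ _ ih1 ih2 =>
      constructor
      · intro l Q' h
        obtain ⟨l', M, hl, hs, hc⟩ := ih2.1 l Q' h
        obtain ⟨l'', P', hl', hs', hc'⟩ := ih1.1 l' M hs
        exact ⟨l'', P', hl.trans' hl', hs', hc'.trans hc⟩
      · intro l P' h
        obtain ⟨l', M, hl, hs, hc⟩ := ih1.2 l P' h
        obtain ⟨l'', Q', hl', hs', hc'⟩ := ih2.2 l' M hs
        exact ⟨l'', Q', hl.trans' hl', hs', hc'.trans hc⟩
  | parComm P Q =>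
      constructor
      · intro l X h
        cases h with
        | parL _ h => exact ⟨l, _, LCong.refl l, SStep.parR P h, SCong.parComm _ _⟩
        | parR _ h => exact ⟨l, _, LCong.refl l, SStep.parL Q h, SCong.parComm _ _⟩
        | comm1 h1 h2 => exact ⟨.tau, _, LCong.refl _, SStep.comm2 h2 h1, SCong.parComm _ _⟩
        | comm2 h1 h2 => exact ⟨.tau, _, LCong.refl _, SStep.comm1 h2 h1, SCong.parComm _ _⟩
      · intro l X h
        cases h with
        | parL _ h => exact ⟨l, _, LCong.refl l, SStep.parR Q h, SCong.parComm _ _⟩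
        | parR _ h => exact ⟨l, _, LCong.refl l, SStep.parL P h, SCong.parComm _ _⟩
        | comm1 h1 h2 => exact ⟨.tau, _, LCong.refl _, SStep.comm2 h2 h1, SCong.parComm _ _⟩
        | comm2 h1 h2 => exact ⟨.tau, _, LCong.refl _, SStep.comm1 h2 h1, SCong.parComm _ _⟩
  | parAssoc P Q R =>
      constructor
      · -- steps of P || (Q || R) matched by (P || Q) || R
        intro l X h
        cases h with
        | parL _ h =>
            exact ⟨l, _, LCong.refl l, SStep.parL R (SStep.parL Q h), SCong.parAssoc _ _ _⟩
        | parR _ h =>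
            cases h with
            | parL _ h =>
                exact ⟨l, _, LCong.refl l, SStep.parL R (SStep.parR P h), SCong.parAssoc _ _ _⟩
            | parR _ h =>
                exact ⟨l, _, LCong.refl l, SStep.parR _ h, SCong.parAssoc _ _ _⟩
            | comm1 h1 h2 =>
                exact ⟨.tau, _, LCong.refl _, SStep.comm1 (SStep.parR P h1) h2, SCong.parAssoc _ _ _⟩
            | comm2 h1 h2 =>
                exact ⟨.tau, _, LCong.refl _, SStep.comm2 (SStep.parR P h1) h2, SCong.parAssoc _ _ _⟩
        | comm1 h1 h2 =>
            cases h2 with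
            | parL _ h2 =>
                exact ⟨.tau, _, LCong.refl _, SStep.parL R (SStep.comm1 h1 h2), SCong.parAssoc _ _ _⟩
            | parR _ h2 =>
                exact ⟨.tau, _, LCong.refl _, SStep.comm1 (SStep.parL Q h1) h2, SCong.parAssoc _ _ _⟩
        | comm2 h1 h2 =>
            cases h2 with
            | parL _ h2 =>
                exact ⟨.tau, _, LCong.refl _, SStep.parL R (SStep.comm2 h1 h2), SCong.parAssoc _ _ _⟩
            | parR _ h2 =>
                exact ⟨.tau, _, LCong.refl _, SStep.comm2 (SStep.parL Q h1) h2, SCong.parAssoc _ _ _⟩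
      · -- steps of (P || Q) || R matched by P || (Q || R)
        intro l X h
        cases h with
        | parL _ h =>
            cases h with
            | parL _ h =>
                exact ⟨l, _, LCong.refl l, SStep.parL _ h, (SCong.parAssoc _ _ _).symm⟩
            | parR _ h =>
                exact ⟨l, _, LCong.refl l, SStep.parR P (SStep.parL R h), (SCong.parAssoc _ _ _).symm⟩
            | comm1 h1 h2 =>
                exact ⟨.tau, _, LCong.refl _, SStep.comm1 h1 (SStep.parL R h2), (SCong.parAssoc _ _ _).symm⟩
            | comm2 h1 h2 =>
                exact ⟨.tau, _, LCong.refl _, SStep.comm2 h1 (SStep.parL R h2), (SCong.parAssoc _ _ _).symm⟩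
        | parR _ h =>
            exact ⟨l, _, LCong.refl l, SStep.parR P (SStep.parR Q h), (SCong.parAssoc _ _ _).symm⟩
        | comm1 h1 h2 =>
            cases h1 with
            | parL _ h1 =>
                exact ⟨.tau, _, LCong.refl _, SStep.comm1 h1 (SStep.parR Q h2), (SCong.parAssoc _ _ _).symm⟩
            | parR _ h1 =>
                exact ⟨.tau, _, LCong.refl _, SStep.parR P (SStep.comm1 h1 h2), (SCong.parAssoc _ _ _).symm⟩
        | comm2 h1 h2 =>
            cases h1 with
            | parL _ h1 =>
                exact ⟨.tau, _, LCong.refl _, SStep.comm2 h1 (SStep.parR Q h2), (SCong.parAssoc _ _ _).symm⟩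
            | parR _ h1 =>
                exact ⟨.tau, _, LCong.refl _, SStep.parR P (SStep.comm2 h1 h2), (SCong.parAssoc _ _ _).symm⟩
  | parNil P =>
      constructor
      · intro l Q' h
        exact ⟨l, _, LCong.refl l, SStep.parL Proc.nil h, SCong.parNil _⟩
      · intro l P' h
        cases h with
        | parL _ h => exact ⟨l, _, LCong.refl l, h, (SCong.parNil _).symm⟩
        | parR _ h => cases h
        | comm1 h1 h2 => cases h2
        | comm2 h1 h2 => cases h2
  | @parCong P P' Q Q' _ _ ih1 ih2 =>
      constructor
      · intro l X h
        cases h with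
        | parL _ h =>
            obtain ⟨l', Y, hl, hs, hc⟩ := ih1.1 l _ h
            exact ⟨l', _, hl, SStep.parL Q hs, SCong.parCong hc (by assumption)⟩
        | parR _ h =>
            obtain ⟨l', Y, hl, hs, hc⟩ := ih2.1 l _ h
            exact ⟨l', _, hl, SStep.parR P hs, SCong.parCong (by assumption) hc⟩
        | @comm1 _ _ A B a R h1 h2 =>
            obtain ⟨l', Y, hl, hs, hc⟩ := ih1.1 _ _ h1
            cases hl with
            | outl _ hR =>
              obtain ⟨l'', Z, hl', hs', hc'⟩ := ih2.1 _ _ h2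
              cases hl' with
              | inl _ hR' =>
                obtain ⟨Z', hz1, hz2⟩ := inl_flex hs' (hR'.symm.trans hR)
                exact ⟨.tau, _, LCong.tau, SStep.comm1 hs hz1,
                  SCong.parCong hc (hz2.symm.trans hc')⟩
        | @comm2 _ _ A B a R h1 h2 =>
            obtain ⟨l', Y, hl, hs, hc⟩ := ih2.1 _ _ h2
            cases hl with
            | outl _ hR =>
              obtain ⟨l'', Z, hl', hs', hc'⟩ := ih1.1 _ _ h1
              cases hl' with
              | inl _ hR' =>
                obtain ⟨Z', hz1, hz2⟩ := inl_flex hs' (hR'.symm.trans hR)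
                exact ⟨.tau, _, LCong.tau, SStep.comm2 hz1 hs,
                  SCong.parCong (hz2.symm.trans hc') hc⟩
      · intro l X h
        cases h with
        | parL _ h =>
            obtain ⟨l', Y, hl, hs, hc⟩ := ih1.2 l _ h
            exact ⟨l', _, hl, SStep.parL Q' hs, SCong.parCong hc (SCong.symm (by assumption))⟩
        | parR _ h =>
            obtain ⟨l', Y, hl, hs, hc⟩ := ih2.2 l _ h
            exact ⟨l', _, hl, SStep.parR P' hs, SCong.parCong (SCong.symm (by assumption)) hc⟩
        | @comm1 _ _ A B a R h1 h2 =>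
            obtain ⟨l', Y, hl, hs, hc⟩ := ih1.2 _ _ h1
            cases hl with
            | outl _ hR =>
              obtain ⟨l'', Z, hl', hs', hc'⟩ := ih2.2 _ _ h2
              cases hl' with
              | inl _ hR' =>
                obtain ⟨Z', hz1, hz2⟩ := inl_flex hs' (hR'.symm.trans hR)
                exact ⟨.tau, _, LCong.tau, SStep.comm1 hs hz1,
                  SCong.parCong hc (hz2.symm.trans hc')⟩
        | @comm2 _ _ A B a R h1 h2 =>
            obtain ⟨l', Y, hl, hs, hc⟩ := ih2.2 _ _ h2
            cases hl with
            | outl _ hR =>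
              obtain ⟨l'', Z, hl', hs', hc'⟩ := ih1.2 _ _ h1
              cases hl' with
              | inl _ hR' =>
                obtain ⟨Z', hz1, hz2⟩ := inl_flex hs' (hR'.symm.trans hR)
                exact ⟨.tau, _, LCong.tau, SStep.comm2 hz1 hs,
                  SCong.parCong (hz2.symm.trans hc') hc⟩
  | @inpCong P P' a hPP' ih =>
      constructor
      · intro l X h
        cases h with
        | inpS _ _ R =>
            exact ⟨.inl a R, _, LCong.refl _, SStep.inpS a P R, hPP'.substL 0 R⟩
      · intro l X h
        cases h with
        | inpS _ _ R =>
            exact ⟨.inl a R, _, LCong.refl _, SStep.inpS a P' R, hPP'.symm.substL 0 R⟩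
  | @outCong P P' a hPP' ih =>
      constructor
      · intro l X h
        cases h with
        | outS => exact ⟨.outl a P, _, LCong.outl a hPP'.symm, SStep.outS a P, SCong.refl _⟩
      · intro l X h
        cases h with
        | outS => exact ⟨.outl a P', _, LCong.outl a hPP', SStep.outS a P', SCong.refl _⟩
/-- Every `Step` is a structural step up to congruence of labels and targets. -/
theorem step_sstep {P l Q} (h : Step P l Q) :
    ∃ l' Q', LCong l l' ∧ SStep P l' Q' ∧ SCong Q' Q := by
  induction h with
  | outS a P => exact ⟨_, _, LCong.refl _, SStep.outS a P, SCong.refl _⟩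
  | inpS a Q P => exact ⟨_, _, LCong.refl _, SStep.inpS a Q P, SCong.refl _⟩
  | parL Q _ ih =>
      obtain ⟨l', P1, hl, hs, hc⟩ := ih
      exact ⟨l', _, hl, SStep.parL Q hs, SCong.parCong hc (SCong.refl Q)⟩
  | parR P _ ih =>
      obtain ⟨l', Q1, hl, hs, hc⟩ := ih
      exact ⟨l', _, hl, SStep.parR P hs, SCong.parCong (SCong.refl P) hc⟩
  | comm1 _ _ ih1 ih2 =>
      obtain ⟨l1, P1, hl1, hs1, hc1⟩ := ih1
      obtain ⟨l2, Q1, hl2, hs2, hc2⟩ := ih2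
      cases hl1 with
      | outl _ hR1 =>
        cases hl2 with
        | inl _ hR2 =>
          obtain ⟨Q2, hq1, hq2⟩ := inl_flex hs2 (hR2.symm.trans hR1)
          exact ⟨.tau, _, LCong.tau, SStep.comm1 hs1 hq1,
            SCong.parCong hc1 (hq2.symm.trans hc2)⟩
  | comm2 _ _ ih1 ih2 =>
      obtain ⟨l1, P1, hl1, hs1, hc1⟩ := ih1
      obtain ⟨l2, Q1, hl2, hs2, hc2⟩ := ih2
      cases hl1 with
      | inl _ hR1 =>
        cases hl2 with
        | outl _ hR2 =>
          obtain ⟨P2, hp1, hp2⟩ := inl_flex hs1 (hR1.symm.trans hR2)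
          exact ⟨.tau, _, LCong.tau, SStep.comm2 hp1 hs2,
            SCong.parCong (hp2.symm.trans hc1) hc2⟩
  | struct hPP' _ hQ'Q ih =>
      obtain ⟨l2, Q2, hl, hs, hc⟩ := ih
      obtain ⟨l3, Q3, hl', hs', hc'⟩ := (scong_bisim hPP').1 l2 Q2 hs
      exact ⟨l3, Q3, hl.trans' hl', hs', (hc'.trans hc).trans hQ'Q⟩

theorem step_tau_sstep {P Q} (h : Step P .tau Q) :
    ∃ Q', SStep P .tau Q' ∧ SCong Q' Q := by
  obtain ⟨l', Q', hl, hs, hc⟩ := step_sstep h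
  cases hl
  exact ⟨Q', hs, hc⟩

theorem nil_par (P : Proc) : SCong (.par .nil P) P :=
  (SCong.parComm _ _).trans (SCong.parNil _)

/-! ### KAM simulation lemmas -/

/-- Intermediate process reached after the first τ-step of a Grab. -/
def MP (t s : Tm) (π : Stk) : Proc :=
  .par (.inp hdN (trT t)) (.par (.out hdN (trT s)) (.out cN (trStk π)))

theorem push_sstep (t s : Tm) (π : Stk) :
    SStep (trConf ⟨.app t s, π⟩) .tau (.par (trConf ⟨t, .cons s π⟩) .nil) := by
  have h := SStep.comm2
    (SStep.inpS cN (.par ((trT t).lift 1 0)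
        (.out cN (.par (.out hdN ((trT s).lift 1 0)) (.out cN (.pvar 0))))) (trStk π))
    (SStep.outS cN (trStk π))
  simpa [trConf, trT, trStk, Proc.subst, Proc.subst_lift_cancel, Proc.lift_zero] using h

theorem lam_sstep (t : Tm) (π : Stk) :
    SStep (trConf ⟨.lam t, π⟩) .tau (.par (.par (.inp hdN (trT t)) (trStk π)) .nil) := by
  have h := SStep.comm2
    (SStep.inpS cN (.par (.inp hdN ((trT t).lift 1 1)) (.pvar 0)) (trStk π))
    (SStep.outS cN (trStk π))
  simpa [trConf, trT, Proc.subst, Proc.subst_lift_cancel, Proc.lift_zero] using h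

theorem grab_sstep (t s : Tm) (π : Stk) :
    SStep (MP t s π) .tau (.par ((trT t).subst 0 (trT s)) (.par .nil (.out cN (trStk π)))) :=
  SStep.comm2 (SStep.inpS hdN _ (trT s)) (SStep.parL _ (SStep.outS hdN (trT s)))

theorem kstep_closed {C C'} (h : KStep C C') (hc : KConfClosed C) : KConfClosed C' := by
  cases h with
  | @push t s π =>
      exact ⟨hc.1.1, hc.1.2, hc.2⟩
  | @grab t s π =>
      exact ⟨Tm.substT_closed t 0 s hc.1 hc.2.1, hc.2.2⟩

theorem forward_one {C C'} (h : KStep C C') : WTau (trConf C) (trConf C') := by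
  cases h with
  | @push t s π =>
      refine Relation.ReflTransGen.single ?_
      exact Step.struct (SCong.refl _) (sstep_to_step (push_sstep t s π)) (SCong.parNil _)
  | @grab t s π =>
      have s1 : Step (trConf ⟨.lam t, .cons s π⟩) .tau (MP t s π) :=
        Step.struct (SCong.refl _) (sstep_to_step (lam_sstep t (.cons s π)))
          (by simpa [MP, trStk] using SCong.parNil (MP t s π))
      have s2 : Step (MP t s π) .tau (trConf ⟨t.substT 0 s, π⟩) := by
        refine Step.struct (SCong.refl _) (sstep_to_step (grab_sstep t s π)) ?_
        show SCong (.par ((trT t).subst 0 (trT s)) (.par .nil (.out cN (trStk π)))) _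
        rw [← trT_subst]
        exact SCong.parCong (SCong.refl _) (nil_par _)
      exact (Relation.ReflTransGen.single s1).tail s2

theorem forward_sim {C C'} (h : KSteps C C') : WTau (trConf C) (trConf C') := by
  induction h with
  | refl => exact Relation.ReflTransGen.refl
  | tail _ hstep ih => exact ih.trans (forward_one hstep)
/-! ### Backward analysis -/

def KInv (C : KConf) (P : Proc) : Prop :=
  ∃ C', KConfClosed C' ∧ KSteps C C' ∧
    (SCong P (trConf C') ∨
     (∃ t s π, C' = ⟨.lam t, .cons s π⟩ ∧ SCong P (MP t s π)) ∨
     (∃ t, C' = ⟨.lam t, .nil⟩ ∧ SCong P (.par (.inp hdN (trT t)) (.out bN .nil))))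

theorem grab_scong (t s : Tm) (π : Stk) :
    SCong (.par ((trT t).subst 0 (trT s)) (.par .nil (.out cN (trStk π))))
      (trConf ⟨t.substT 0 s, π⟩) := by
  show SCong _ (.par (trT (t.substT 0 s)) (.out cN (trStk π)))
  rw [trT_subst]
  exact SCong.parCong (SCong.refl _) (nil_par _)

theorem inv_step {C P Q} (h : KInv C P) (hs : Step P .tau Q) : KInv C Q := by
  obtain ⟨C', hcl, hks, hcase⟩ := h
  obtain ⟨Q0, hQ0, hQ0c⟩ := step_tau_sstep hs
  rcases hcase with hPC | ⟨t, s, π, rfl, hPC⟩ | ⟨t, rfl, hPC⟩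
  · -- P ≡ trConf C'
    obtain ⟨l', Q1, hl, hs1, hc1⟩ := (scong_bisim hPC).2 .tau Q0 hQ0
    cases hl
    obtain ⟨t, π⟩ := C'
    cases t with
    | bvar n =>
        exfalso
        have := hcl.1
        simp [Tm.Closed, Tm.ClosedUnder] at this
    | app t s =>
        simp only [trConf, trT] at hs1
        cases hs1 with
        | parL _ h1 => cases h1
        | parR _ h2 => cases h2
        | comm1 h1 h2 => cases h1
        | comm2 h1 h2 =>
            cases h1
            cases h2
            refine ⟨⟨t, .cons s π⟩, ⟨hcl.1.1, hcl.1.2, hcl.2⟩, hks.tail KStep.push, Or.inl ?_⟩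
            have heq : (Proc.par ((trT t).lift 1 0)
                (.out cN (.par (.out hdN ((trT s).lift 1 0)) (.out cN (.pvar 0))))).subst 0 (trStk π)
                = trConf ⟨t, .cons s π⟩ := by
              simp [trConf, trStk, Proc.subst, Proc.subst_lift_cancel, Proc.lift_zero]
            refine (hQ0c.symm.trans hc1.symm).trans ?_
            rw [heq]
            exact SCong.parNil _
    | lam t =>
        simp only [trConf, trT] at hs1
        cases hs1 with
        | parL _ h1 => cases h1
        | parR _ h2 => cases h2
        | comm1 h1 h2 => cases h1
        | comm2 h1 h2 =>
            cases h1
            cases h2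
            have heq : (Proc.par (.inp hdN ((trT t).lift 1 1)) (.pvar 0)).subst 0 (trStk π)
                = .par (.inp hdN (trT t)) (trStk π) := by
              simp [Proc.subst, Proc.subst_lift_cancel, Proc.lift_zero]
            cases π with
            | nil =>
                refine ⟨⟨.lam t, .nil⟩, hcl, hks, Or.inr (Or.inr ⟨t, rfl, ?_⟩)⟩
                refine (hQ0c.symm.trans hc1.symm).trans ?_
                rw [heq]
                exact SCong.parNil _
            | cons s π' =>
                refine ⟨⟨.lam t, .cons s π'⟩, hcl, hks, Or.inr (Or.inl ⟨t, s, π', rfl, ?_⟩)⟩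
                refine (hQ0c.symm.trans hc1.symm).trans ?_
                rw [heq]
                exact SCong.parNil _
  · -- P ≡ MP t s π
    obtain ⟨l', Q1, hl, hs1, hc1⟩ := (scong_bisim hPC).2 .tau Q0 hQ0
    cases hl
    simp only [MP] at hs1
    cases hs1 with
    | parL _ h1 => cases h1
    | parR _ h2 =>
        cases h2 with
        | parL _ h => cases h
        | parR _ h => cases h
        | comm1 h1 h2 => cases h2
        | comm2 h1 h2 => cases h1
    | comm1 h1 h2 => cases h1
    | comm2 h1 h2 =>
        cases h1
        cases h2 with
        | parL _ h =>
            cases h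
            refine ⟨⟨t.substT 0 s, π⟩,
              ⟨Tm.substT_closed t 0 s hcl.1 hcl.2.1, hcl.2.2⟩,
              hks.tail KStep.grab, Or.inl ?_⟩
            exact (hQ0c.symm.trans hc1.symm).trans (grab_scong t s π)
        | parR _ h => cases h
  · -- P ≡ hd-input in parallel with b-output: no τ-step possible
    exfalso
    obtain ⟨l', Q1, hl, hs1, hc1⟩ := (scong_bisim hPC).2 .tau Q0 hQ0
    cases hl
    cases hs1 with
    | parL _ h1 => cases h1
    | parR _ h2 => cases h2
    | comm1 h1 h2 => cases h1
    | comm2 h1 h2 =>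
        cases h1
        cases h2

/-- Theorem (operational correspondence).  Forward: if `C ->* C'` in the KAM then
`[[C]] ==tau==> [[C']]`.  Backward: if `[[C]] ==tau==> P` then there is a KAM
configuration `C'` with `C ->* C'` and either `P = [[C']]`, or `P --tau--> P' = [[C']]`
for some `P'`, or `C' = <\x.t | []>` and `P = hd(x).[[t]] || b!<0>`
(processes are considered up to structural congruence). -/
theorem kam_operational_correspondence :
    (∀ C C' : KConf, KConfClosed C → KSteps C C' → WTau (trConf C) (trConf C')) ∧
    (∀ (C : KConf) (P : Proc), KConfClosed C → WTau (trConf C) P →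
      ∃ C' : KConf, KSteps C C' ∧
        (SCong P (trConf C') ∨
         (∃ P', Step P Label.tau P' ∧ SCong P' (trConf C')) ∨
         (∃ t : Tm, C' = ⟨.lam t, .nil⟩ ∧
           SCong P (.par (.inp hdN ((trT t).lift 1 1)) (.out bN .nil))))) := by
  constructor
  · intro C C' _ h
    exact forward_sim h
  · intro C P hC hW
    have hKInv : KInv C P := by
      induction hW with
      | refl => exact ⟨C, hC, Relation.ReflTransGen.refl, Or.inl (SCong.refl _)⟩
      | tail _ hstep ih => exact inv_step ih hstep
    obtain ⟨C', hcl, hks, hcase⟩ := hKInv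
    rcases hcase with h | ⟨t, s, π, rfl, h⟩ | ⟨t, rfl, h⟩
    · exact ⟨C', hks, Or.inl h⟩
    · refine ⟨⟨t.substT 0 s, π⟩, hks.tail KStep.grab, Or.inr (Or.inl
        ⟨trConf ⟨t.substT 0 s, π⟩, ?_, SCong.refl _⟩)⟩
      exact Step.struct h (sstep_to_step (grab_sstep t s π)) (grab_scong t s π)
    · refine ⟨⟨.lam t, .nil⟩, hks, Or.inr (Or.inr ⟨t, rfl, ?_⟩)⟩
      have hcl1 : t.ClosedUnder 1 := hcl.1
      rw [trT_lift_closed hcl1 1]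
      exact h
end

section
/- Strong barbed equivalence is undecidable in HOcore with 2 hidden names: for the two-element set of hidden names H = {hd, c}, and for any effective encoding of HOcore processes as natural numbers, the set of codes of pairs (P, Q) of HOcore processes such that P and Q are strongly barbed equivalent w.r.t. H is not a computable (decidable) set. -/
/-! ### Statement 2: undecidability of strong barbed equivalence with 2 hidden names -/

/-- Strong barbed bisimulation w.r.t. the hidden names `H`. -/
def IsStrongBarbedBisim (H : Set Name) (R : Proc → Proc → Prop) : Prop :=
  Symmetric R ∧ ∀ P Q, R P Q →
    (∀ α, StrongBarb H P α → StrongBarb H Q α) ∧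
    (∀ S : Proc, ((S.fnames : Set Name) ∩ H = ∅) → R (.par P S) (.par Q S)) ∧
    (∀ P', Step P Label.tau P' → ∃ Q', Step Q Label.tau Q' ∧ R P' Q')

/-- Strong barbed equivalence w.r.t. the hidden names `H`. -/
def StrongBarbedEquiv (H : Set Name) (P Q : Proc) : Prop :=
  ∃ R, IsStrongBarbedBisim H R ∧ R P Q

/-- A canonical effective Gödel numbering of HOcore processes. -/
def encodeProc : Proc → ℕ
  | .nil => 0
  | .pvar n => 5 * n + 1
  | .par P Q => 5 * Nat.pair (encodeProc P) (encodeProc Q) + 2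
  | .inp a P => 5 * Nat.pair a (encodeProc P) + 3
  | .out a P => 5 * Nat.pair a (encodeProc P) + 4

namespace HOU
open Proc
/-! ### Auxiliary infrastructure for the undecidability proof -/

open Proc

/-- `CA k P`: all free de Bruijn variables of `P` are `< k`. -/
def CA : ℕ → Proc → Prop
  | _, .nil => True
  | k, .pvar n => n < k
  | k, .par P Q => CA k P ∧ CA k Q
  | k, .inp _ P => CA (k+1) P
  | k, .out _ P => CA k P

theorem CA.mono : ∀ {P : Proc} {k k' : ℕ}, k ≤ k' → CA k P → CA k' P := by
  intro P
  induction P with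
  | nil => intro _ _ _ _; trivial
  | pvar n => intro k k' h hp; exact lt_of_lt_of_le hp h
  | par P Q ihP ihQ => intro k k' h hp; exact ⟨ihP h hp.1, ihQ h hp.2⟩
  | inp a P ih => intro k k' h hp; exact ih (Nat.succ_le_succ h) hp
  | out a P ih => intro k k' h hp; exact ih h hp

theorem lift_of_CA : ∀ {P : Proc} {k k' d : ℕ}, CA k P → k ≤ k' → lift d k' P = P := by
  intro P
  induction P with
  | nil => intros; rfl
  | pvar n => intro k k' d hp h; simp [Proc.lift, lt_of_lt_of_le hp h]
  | par P Q ihP ihQ => intro k k' d hp h; simp [Proc.lift, ihP hp.1 h, ihQ hp.2 h]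
  | inp a P ih =>
      intro k k' d hp h
      simp only [Proc.lift]
      rw [ih (show CA (k+1) P from hp) (Nat.succ_le_succ h)]
  | out a P ih =>
      intro k k' d hp h
      simp only [Proc.lift]
      rw [ih (show CA k P from hp) h]

theorem subst_of_CA : ∀ {P : Proc} {k k' : ℕ} {S : Proc}, CA k P → k ≤ k' → subst P k' S = P := by
  intro P
  induction P with
  | nil => intros; rfl
  | pvar n =>
      intro k k' S hp h
      have h1 : n ≠ k' := Nat.ne_of_lt (lt_of_lt_of_le hp h)
      have h2 : ¬ k' < n := Nat.not_lt.2 (Nat.le_of_lt (lt_of_lt_of_le hp h))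
      simp [Proc.subst, h1, h2]
  | par P Q ihP ihQ => intro k k' S hp h; simp [Proc.subst, ihP hp.1 h, ihQ hp.2 h]
  | inp a P ih =>
      intro k k' S hp h
      simp only [Proc.subst]
      rw [ih (show CA (k+1) P from hp) (Nat.succ_le_succ h)]
  | out a P ih =>
      intro k k' S hp h
      simp only [Proc.subst]
      rw [ih (show CA k P from hp) h]

/-- Substitution of a closed process preserves closedness bounds. -/
theorem CA.subst : ∀ {P : Proc} {k : ℕ} {S : Proc}, CA (k+1) P → CA 0 S →
    CA k (Proc.subst P k S) := by
  intro P
  induction P with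
  | nil => intros; trivial
  | pvar n =>
      intro k S hp hs
      rcases Nat.lt_or_ge n k with h | h
      · have h1 : n ≠ k := Nat.ne_of_lt h
        simp [Proc.subst, h1, Nat.not_lt.2 (Nat.le_of_lt h), CA, h]
      · have : n = k := Nat.le_antisymm (Nat.lt_succ_iff.1 hp) h
        subst this
        simp only [Proc.subst, if_pos rfl]
        rw [lift_of_CA hs (Nat.zero_le _)]
        exact CA.mono (Nat.zero_le _) hs
  | par P Q ihP ihQ => intro k S hp hs; exact ⟨ihP hp.1 hs, ihQ hp.2 hs⟩
  | inp a P ih => intro k S hp hs; exact ih (show CA (k+1+1) P from hp) hs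
  | out a P ih => intro k S hp hs; exact ih hp hs

theorem scong_lift {P Q : Proc} (h : SCong P Q) : ∀ d k, SCong (lift d k P) (lift d k Q) := by
  induction h with
  | refl P => exact fun d k => SCong.refl _
  | symm _ ih => exact fun d k => (ih d k).symm
  | trans _ _ ih1 ih2 => exact fun d k => (ih1 d k).trans (ih2 d k)
  | parComm P Q => exact fun d k => SCong.parComm _ _
  | parAssoc P Q R => exact fun d k => SCong.parAssoc _ _ _
  | parNil P => exact fun d k => SCong.parNil _
  | parCong _ _ ih1 ih2 => exact fun d k => SCong.parCong (ih1 d k) (ih2 d k)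
  | inpCong a _ ih => exact fun d k => SCong.inpCong a (ih d (k+1))
  | outCong a _ ih => exact fun d k => SCong.outCong a (ih d k)

theorem scong_subst_left {P Q : Proc} (h : SCong P Q) :
    ∀ k S, SCong (subst P k S) (subst Q k S) := by
  induction h with
  | refl P => exact fun k S => SCong.refl _
  | symm _ ih => exact fun k S => (ih k S).symm
  | trans _ _ ih1 ih2 => exact fun k S => (ih1 k S).trans (ih2 k S)
  | parComm P Q => exact fun k S => SCong.parComm _ _
  | parAssoc P Q R => exact fun k S => SCong.parAssoc _ _ _
  | parNil P => exact fun k S => SCong.parNil _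
  | parCong _ _ ih1 ih2 => exact fun k S => SCong.parCong (ih1 k S) (ih2 k S)
  | inpCong a _ ih => exact fun k S => SCong.inpCong a (ih (k+1) S)
  | outCong a _ ih => exact fun k S => SCong.outCong a (ih k S)

theorem scong_subst_right {S S' : Proc} (h : SCong S S') :
    ∀ (P : Proc) (k : ℕ), SCong (subst P k S) (subst P k S') := by
  intro P
  induction P with
  | nil => exact fun k => SCong.refl _
  | pvar n => intro k
              by_cases h1 : n = k
              · simp [Proc.subst, h1]; exact scong_lift h k 0
              · by_cases h2 : k < n <;> simp [Proc.subst, h1, h2] <;> exact SCong.refl _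
  | par P Q ihP ihQ => exact fun k => SCong.parCong (ihP k) (ihQ k)
  | inp a P ih => exact fun k => SCong.inpCong a (ih (k+1))
  | out a P ih => exact fun k => SCong.outCong a (ih k)

/-- The struct-free fragment of the LTS. -/
inductive Step0 : Proc → Label → Proc → Prop
  | outS (a P) : Step0 (.out a P) (.outl a P) .nil
  | inpS (a Q P) : Step0 (.inp a Q) (.inl a P) (Q.subst 0 P)
  | parL {P l P'} (Q) : Step0 P l P' → Step0 (.par P Q) l (.par P' Q)
  | parR {Q l Q'} (P) : Step0 Q l Q' → Step0 (.par P Q) l (.par P Q')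
  | comm1 {P Q P' Q' a R} : Step0 P (.outl a R) P' → Step0 Q (.inl a R) Q' →
      Step0 (.par P Q) .tau (.par P' Q')
  | comm2 {P Q P' Q' a R} : Step0 P (.inl a R) P' → Step0 Q (.outl a R) Q' →
      Step0 (.par P Q) .tau (.par P' Q')

/-- Labels related up to structural congruence of output payloads. -/
inductive LabR : Label → Label → Prop
  | tau : LabR .tau .tau
  | out {P P'} (a) : SCong P P' → LabR (.outl a P) (.outl a P')
  | inl (a P) : LabR (.inl a P) (.inl a P)

theorem LabR.rfl : ∀ l, LabR l l
  | .tau => .tau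
  | .outl a P => .out a (SCong.refl P)
  | .inl a P => .inl a P

theorem LabR.symm' {l l'} : LabR l l' → LabR l' l
  | .tau => .tau
  | .out a h => .out a h.symm
  | .inl a P => .inl a P

theorem LabR.trans' {l₁ l₂ l₃} : LabR l₁ l₂ → LabR l₂ l₃ → LabR l₁ l₃ := by
  intro h1 h2
  cases h1 <;> cases h2
  · exact .tau
  · exact .out _ (SCong.trans ‹_› ‹_›)
  · exact .inl _ _

theorem step0_step {P l Q} (h : Step0 P l Q) : Step P l Q := by
  induction h with
  | outS a P => exact Step.outS a P
  | inpS a Q P => exact Step.inpS a Q P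
  | parL Q _ ih => exact Step.parL Q ih
  | parR P _ ih => exact Step.parR P ih
  | comm1 _ _ ih1 ih2 => exact Step.comm1 ih1 ih2
  | comm2 _ _ ih1 ih2 => exact Step.comm2 ih1 ih2

/-- Input transitions can take any payload. -/
theorem step0_inl_any {Q : Proc} {a R Y} (h : Step0 Q (.inl a R) Y) :
    ∀ R', ∃ Y', Step0 Q (.inl a R') Y' ∧ (SCong R R' → SCong Y Y') := by
  generalize hl : Label.inl a R = l at h
  induction h with
  | outS => exact absurd hl (by simp)
  | inpS b B _ =>
      cases hl
      exact fun R' => ⟨B.subst 0 R', Step0.inpS _ B R', fun h => scong_subst_right h B 0⟩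
  | parL Q _ ih =>
      intro R'
      obtain ⟨Y', h1, h2⟩ := ih hl R'
      exact ⟨_, .parL Q h1, fun h => SCong.parCong (h2 h) (SCong.refl _)⟩
  | parR P _ ih =>
      intro R'
      obtain ⟨Y', h1, h2⟩ := ih hl R'
      exact ⟨_, .parR P h1, fun h => SCong.parCong (SCong.refl _) (h2 h)⟩
  | comm1 _ _ _ _ => exact absurd hl (by simp)
  | comm2 _ _ _ _ => exact absurd hl (by simp)

open Proc

theorem comm_dir {P Q : Proc} : ∀ {l X}, Step0 (.par P Q) l X →
    ∃ X', Step0 (.par Q P) l X' ∧ SCong X X' := by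
  intro l X h
  cases h with
  | parL _ h => exact ⟨_, .parR _ h, SCong.parComm _ _⟩
  | parR _ h => exact ⟨_, .parL _ h, SCong.parComm _ _⟩
  | comm1 h1 h2 => exact ⟨_, .comm2 h2 h1, SCong.parComm _ _⟩
  | comm2 h1 h2 => exact ⟨_, .comm1 h2 h1, SCong.parComm _ _⟩

theorem assoc_dir1 {P Q R : Proc} : ∀ {l X}, Step0 (.par (.par P Q) R) l X →
    ∃ X', Step0 (.par P (.par Q R)) l X' ∧ SCong X X' := by
  intro l X h
  cases h with
  | parL _ h =>
      cases h with
      | parL _ hP => exact ⟨_, .parL _ hP, SCong.parAssoc _ _ _⟩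
      | parR _ hQ => exact ⟨_, .parR _ (.parL _ hQ), SCong.parAssoc _ _ _⟩
      | comm1 hP hQ => exact ⟨_, .comm1 hP (.parL _ hQ), SCong.parAssoc _ _ _⟩
      | comm2 hP hQ => exact ⟨_, .comm2 hP (.parL _ hQ), SCong.parAssoc _ _ _⟩
  | parR _ h => exact ⟨_, .parR _ (.parR _ h), SCong.parAssoc _ _ _⟩
  | comm1 h1 h2 =>
      cases h1 with
      | parL _ hP => exact ⟨_, .comm1 hP (.parR _ h2), SCong.parAssoc _ _ _⟩
      | parR _ hQ => exact ⟨_, .parR _ (.comm1 hQ h2), SCong.parAssoc _ _ _⟩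
  | comm2 h1 h2 =>
      cases h1 with
      | parL _ hP => exact ⟨_, .comm2 hP (.parR _ h2), SCong.parAssoc _ _ _⟩
      | parR _ hQ => exact ⟨_, .parR _ (.comm2 hQ h2), SCong.parAssoc _ _ _⟩

theorem assoc_dir2 {P Q R : Proc} : ∀ {l X}, Step0 (.par P (.par Q R)) l X →
    ∃ X', Step0 (.par (.par P Q) R) l X' ∧ SCong X X' := by
  intro l X h
  cases h with
  | parL _ hP => exact ⟨_, .parL _ (.parL _ hP), (SCong.parAssoc _ _ _).symm⟩
  | parR _ h =>
      cases h with
      | parL _ hQ => exact ⟨_, .parL _ (.parR _ hQ), (SCong.parAssoc _ _ _).symm⟩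
      | parR _ hR => exact ⟨_, .parR _ hR, (SCong.parAssoc _ _ _).symm⟩
      | comm1 hQ hR => exact ⟨_, .comm1 (.parR _ hQ) hR, (SCong.parAssoc _ _ _).symm⟩
      | comm2 hQ hR => exact ⟨_, .comm2 (.parR _ hQ) hR, (SCong.parAssoc _ _ _).symm⟩
  | comm1 hP h2 =>
      cases h2 with
      | parL _ hQ => exact ⟨_, .parL _ (.comm1 hP hQ), (SCong.parAssoc _ _ _).symm⟩
      | parR _ hR => exact ⟨_, .comm1 (.parL _ hP) hR, (SCong.parAssoc _ _ _).symm⟩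
  | comm2 hP h2 =>
      cases h2 with
      | parL _ hQ => exact ⟨_, .parL _ (.comm2 hP hQ), (SCong.parAssoc _ _ _).symm⟩
      | parR _ hR => exact ⟨_, .comm2 (.parL _ hP) hR, (SCong.parAssoc _ _ _).symm⟩

theorem nil_dir1 {P : Proc} : ∀ {l X}, Step0 (.par P .nil) l X →
    ∃ X', Step0 P l X' ∧ SCong X X' := by
  intro l X h
  cases h with
  | parL _ h => exact ⟨_, h, SCong.parNil _⟩
  | parR _ h => cases h
  | comm1 h1 h2 => cases h2
  | comm2 h1 h2 => cases h2

/-- Structural congruence commutes with struct-free steps. -/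
theorem scong_step0 {P Q : Proc} (h : SCong P Q) :
    (∀ {l X}, Step0 P l X → ∃ l' X', Step0 Q l' X' ∧ LabR l l' ∧ SCong X X') ∧
    (∀ {l X}, Step0 Q l X → ∃ l' X', Step0 P l' X' ∧ LabR l l' ∧ SCong X X') := by
  induction h with
  | refl P =>
      exact ⟨fun h => ⟨_, _, h, LabR.rfl _, SCong.refl _⟩,
             fun h => ⟨_, _, h, LabR.rfl _, SCong.refl _⟩⟩
  | symm _ ih => exact ⟨fun h => ih.2 h, fun h => ih.1 h⟩
  | trans _ _ ih1 ih2 =>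
      constructor
      · intro l X h
        obtain ⟨l1, X1, h1, hl1, hs1⟩ := ih1.1 h
        obtain ⟨l2, X2, h2, hl2, hs2⟩ := ih2.1 h1
        exact ⟨l2, X2, h2, hl1.trans' hl2, hs1.trans hs2⟩
      · intro l X h
        obtain ⟨l1, X1, h1, hl1, hs1⟩ := ih2.2 h
        obtain ⟨l2, X2, h2, hl2, hs2⟩ := ih1.2 h1
        exact ⟨l2, X2, h2, hl1.trans' hl2, hs1.trans hs2⟩
  | parComm P Q =>
      constructor
      · intro l X h; obtain ⟨X', h', hs⟩ := comm_dir h; exact ⟨l, X', h', LabR.rfl _, hs⟩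
      · intro l X h; obtain ⟨X', h', hs⟩ := comm_dir h; exact ⟨l, X', h', LabR.rfl _, hs⟩
  | parAssoc P Q R =>
      constructor
      · intro l X h; obtain ⟨X', h', hs⟩ := assoc_dir1 h; exact ⟨l, X', h', LabR.rfl _, hs⟩
      · intro l X h; obtain ⟨X', h', hs⟩ := assoc_dir2 h; exact ⟨l, X', h', LabR.rfl _, hs⟩
  | parNil P =>
      constructor
      · intro l X h; obtain ⟨X', h', hs⟩ := nil_dir1 h; exact ⟨l, X', h', LabR.rfl _, hs⟩
      · intro l X h; exact ⟨l, _, .parL _ h, LabR.rfl _, (SCong.parNil _).symm⟩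
  | parCong h1 h2 ih1 ih2 =>
      constructor
      · intro l X h
        cases h with
        | parL _ h =>
            obtain ⟨l', X', h', hl, hs⟩ := ih1.1 h
            exact ⟨l', _, .parL _ h', hl, SCong.parCong hs h2⟩
        | parR _ h =>
            obtain ⟨l', X', h', hl, hs⟩ := ih2.1 h
            exact ⟨l', _, .parR _ h', hl, SCong.parCong h1 hs⟩
        | comm1 hA hB =>
            obtain ⟨l', P₁, hP₁, hl, hsP⟩ := ih1.1 hA
            cases hl with
            | out a hc =>
              obtain ⟨l₂, Q₁, hQ₁, hl₂, hsQ⟩ := ih2.1 hB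
              cases hl₂
              obtain ⟨Y₁, hY₁, himp⟩ := step0_inl_any hQ₁ _
              exact ⟨.tau, _, .comm1 hP₁ hY₁, .tau, SCong.parCong hsP (hsQ.trans (himp hc))⟩
        | comm2 hA hB =>
            obtain ⟨l', Q₁, hQ₁, hl, hsQ⟩ := ih2.1 hB
            cases hl with
            | out a hc =>
              obtain ⟨l₂, P₁, hP₁, hl₂, hsP⟩ := ih1.1 hA
              cases hl₂
              obtain ⟨Y₁, hY₁, himp⟩ := step0_inl_any hP₁ _
              exact ⟨.tau, _, .comm2 hY₁ hQ₁, .tau, SCong.parCong (hsP.trans (himp hc)) hsQ⟩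
      · intro l X h
        cases h with
        | parL _ h =>
            obtain ⟨l', X', h', hl, hs⟩ := ih1.2 h
            exact ⟨l', _, .parL _ h', hl, SCong.parCong hs h2.symm⟩
        | parR _ h =>
            obtain ⟨l', X', h', hl, hs⟩ := ih2.2 h
            exact ⟨l', _, .parR _ h', hl, SCong.parCong h1.symm hs⟩
        | comm1 hA hB =>
            obtain ⟨l', P₁, hP₁, hl, hsP⟩ := ih1.2 hA
            cases hl with
            | out a hc =>
              obtain ⟨l₂, Q₁, hQ₁, hl₂, hsQ⟩ := ih2.2 hB
              cases hl₂
              obtain ⟨Y₁, hY₁, himp⟩ := step0_inl_any hQ₁ _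
              exact ⟨.tau, _, .comm1 hP₁ hY₁, .tau, SCong.parCong hsP (hsQ.trans (himp hc))⟩
        | comm2 hA hB =>
            obtain ⟨l', Q₁, hQ₁, hl, hsQ⟩ := ih2.2 hB
            cases hl with
            | out a hc =>
              obtain ⟨l₂, P₁, hP₁, hl₂, hsP⟩ := ih1.2 hA
              cases hl₂
              obtain ⟨Y₁, hY₁, himp⟩ := step0_inl_any hP₁ _
              exact ⟨.tau, _, .comm2 hY₁ hQ₁, .tau, SCong.parCong (hsP.trans (himp hc)) hsQ⟩
  | inpCong a h ih =>
      constructor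
      · intro l X hs
        cases hs with
        | inpS _ _ R => exact ⟨_, _, .inpS a _ R, LabR.inl _ _, scong_subst_left h 0 R⟩
      · intro l X hs
        cases hs with
        | inpS _ _ R => exact ⟨_, _, .inpS a _ R, LabR.inl _ _, scong_subst_left h.symm 0 R⟩
  | outCong a h ih =>
      constructor
      · intro l X hs
        cases hs with
        | outS => exact ⟨_, _, .outS a _, LabR.out a h, SCong.refl _⟩
      · intro l X hs
        cases hs with
        | outS => exact ⟨_, _, .outS a _, LabR.out a h.symm, SCong.refl _⟩

/-- Embed a struct-free step into `Step`, adjusting the label up to `LabR`. -/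
theorem step0_step_labr {P l₀ Q₀} (h : Step0 P l₀ Q₀) : ∀ {l}, LabR l₀ l → Step P l Q₀ := by
  induction h with
  | outS a P =>
      intro l hl
      cases hl with
      | out _ hc => exact Step.struct (SCong.outCong a hc) (Step.outS a _) (SCong.refl _)
  | inpS a Q P =>
      intro l hl
      cases hl
      exact Step.inpS a Q P
  | parL Q _ ih => intro l hl; exact Step.parL Q (ih hl)
  | parR P _ ih => intro l hl; exact Step.parR P (ih hl)
  | comm1 h1 h2 ih1 ih2 =>
      intro l hl
      cases hl
      exact Step.comm1 (ih1 (LabR.rfl _)) (ih2 (LabR.rfl _))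
  | comm2 h1 h2 ih1 ih2 =>
      intro l hl
      cases hl
      exact Step.comm2 (ih1 (LabR.rfl _)) (ih2 (LabR.rfl _))

/-- Characterization of `Step` by struct-free steps. -/
theorem step_iff {P l Q} : Step P l Q ↔
    ∃ l₀ Q₀, Step0 P l₀ Q₀ ∧ LabR l₀ l ∧ SCong Q₀ Q := by
  constructor
  · intro h
    induction h with
    | outS a P => exact ⟨_, _, .outS a P, LabR.rfl _, SCong.refl _⟩
    | inpS a Q P => exact ⟨_, _, .inpS a Q P, LabR.rfl _, SCong.refl _⟩
    | parL Q _ ih =>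
        obtain ⟨l₀, Q₀, h₀, hl, hs⟩ := ih
        exact ⟨l₀, _, .parL Q h₀, hl, SCong.parCong hs (SCong.refl _)⟩
    | parR P _ ih =>
        obtain ⟨l₀, Q₀, h₀, hl, hs⟩ := ih
        exact ⟨l₀, _, .parR P h₀, hl, SCong.parCong (SCong.refl _) hs⟩
    | comm1 hP hQ ih1 ih2 =>
        obtain ⟨l₁, P₀, h₁, hl₁, hs₁⟩ := ih1
        obtain ⟨l₂, Q₀, h₂, hl₂, hs₂⟩ := ih2
        cases hl₁ with
        | out a hc =>
          cases hl₂
          obtain ⟨Y₁, hY₁, himp⟩ := step0_inl_any h₂ _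
          exact ⟨.tau, _, .comm1 h₁ hY₁, .tau,
            SCong.parCong hs₁ ((himp hc.symm).symm.trans hs₂)⟩
    | comm2 hP hQ ih1 ih2 =>
        obtain ⟨l₁, P₀, h₁, hl₁, hs₁⟩ := ih1
        obtain ⟨l₂, Q₀, h₂, hl₂, hs₂⟩ := ih2
        cases hl₂ with
        | out a hc =>
          cases hl₁
          obtain ⟨Y₁, hY₁, himp⟩ := step0_inl_any h₁ _
          exact ⟨.tau, _, .comm2 hY₁ h₂, .tau,
            SCong.parCong ((himp hc.symm).symm.trans hs₁) hs₂⟩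
    | struct hPP' hst hQ'Q ih =>
        obtain ⟨l₀, Q₀, h₀, hl, hs⟩ := ih
        obtain ⟨l₁, Q₁, h₁, hl₁, hs₁⟩ := (scong_step0 hPP').2 h₀
        exact ⟨l₁, Q₁, h₁, hl₁.symm'.trans' hl, hs₁.symm.trans (hs.trans hQ'Q)⟩
  · rintro ⟨l₀, Q₀, h₀, hl, hs⟩
    exact Step.struct (SCong.refl _) (step0_step_labr h₀ hl) hs
open Proc

theorem sc_nil_l (P : Proc) : SCong (.par .nil P) P :=
  (SCong.parComm _ _).trans (SCong.parNil _)

theorem fnames_lift : ∀ (P : Proc) (d k : ℕ), (lift d k P).fnames = P.fnames := by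
  intro P
  induction P with
  | nil => intros; rfl
  | pvar n => intro d k; by_cases h : n < k <;> simp [Proc.lift, h, Proc.fnames]
  | par P Q ihP ihQ => intro d k; simp [Proc.lift, Proc.fnames, ihP, ihQ]
  | inp a P ih => intro d k; simp [Proc.lift, Proc.fnames, ih]
  | out a P ih => intro d k; simp [Proc.lift, Proc.fnames, ih]

theorem fnames_subst : ∀ (P : Proc) (k : ℕ) (S : Proc),
    (subst P k S).fnames ⊆ P.fnames ∪ S.fnames := by
  intro P
  induction P with
  | nil => intro k S; simp [Proc.subst, Proc.fnames]
  | pvar n =>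
      intro k S
      by_cases h1 : n = k
      · simp [Proc.subst, h1, Proc.fnames, fnames_lift]
      · by_cases h2 : k < n <;> simp [Proc.subst, h1, h2, Proc.fnames]
  | par P Q ihP ihQ =>
      intro k S
      simp only [Proc.subst, Proc.fnames]
      intro x hx
      rcases Finset.mem_union.1 hx with h | h
      · have := ihP k S h
        rcases Finset.mem_union.1 this with h | h
        · exact Finset.mem_union_left _ (Finset.mem_union_left _ h)
        · exact Finset.mem_union_right _ h
      · have := ihQ k S h
        rcases Finset.mem_union.1 this with h | h
        · exact Finset.mem_union_left _ (Finset.mem_union_right _ h)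
        · exact Finset.mem_union_right _ h
  | inp a P ih =>
      intro k S
      simp only [Proc.subst, Proc.fnames]
      intro x hx
      rcases Finset.mem_insert.1 hx with h | h
      · exact Finset.mem_union_left _ (by simp [h])
      · have := ih (k+1) S h
        rcases Finset.mem_union.1 this with h | h
        · exact Finset.mem_union_left _ (Finset.mem_insert_of_mem h)
        · exact Finset.mem_union_right _ h
  | out a P ih =>
      intro k S
      simp only [Proc.subst, Proc.fnames]
      intro x hx
      rcases Finset.mem_insert.1 hx with h | h
      · exact Finset.mem_union_left _ (by simp [h])
      · have := ih k S h
        rcases Finset.mem_union.1 this with h | h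
        · exact Finset.mem_union_left _ (Finset.mem_insert_of_mem h)
        · exact Finset.mem_union_right _ h

theorem fnames_scong {P Q : Proc} (h : SCong P Q) : P.fnames = Q.fnames := by
  induction h with
  | refl P => rfl
  | symm _ ih => exact ih.symm
  | trans _ _ ih1 ih2 => exact ih1.trans ih2
  | parComm P Q => simp [Proc.fnames, Finset.union_comm]
  | parAssoc P Q R => simp [Proc.fnames, Finset.union_assoc]
  | parNil P => simp [Proc.fnames]
  | parCong _ _ ih1 ih2 => simp [Proc.fnames, ih1, ih2]
  | inpCong a _ ih => simp [Proc.fnames, ih]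
  | outCong a _ ih => simp [Proc.fnames, ih]

theorem step0_inl_name {P a R X} (h : Step0 P (.inl a R) X) : a ∈ P.fnames := by
  generalize hl : Label.inl a R = l at h
  induction h with
  | outS => exact absurd hl (by simp)
  | inpS b B r => cases hl; simp [Proc.fnames]
  | parL Q _ ih => simp [Proc.fnames]; exact Or.inl (ih hl)
  | parR P _ ih => simp [Proc.fnames]; exact Or.inr (ih hl)
  | comm1 _ _ _ _ => exact absurd hl (by simp)
  | comm2 _ _ _ _ => exact absurd hl (by simp)

theorem step0_out_name {P a R X} (h : Step0 P (.outl a R) X) : a ∈ P.fnames := by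
  generalize hl : Label.outl a R = l at h
  induction h with
  | outS b B => cases hl; simp [Proc.fnames]
  | inpS b B r => exact absurd hl (by simp)
  | parL Q _ ih => simp [Proc.fnames]; exact Or.inl (ih hl)
  | parR P _ ih => simp [Proc.fnames]; exact Or.inr (ih hl)
  | comm1 _ _ _ _ => exact absurd hl (by simp)
  | comm2 _ _ _ _ => exact absurd hl (by simp)

theorem step0_fn {P l X} (h : Step0 P l X) :
    (match l with
     | .tau => X.fnames ⊆ P.fnames
     | .outl _ R => X.fnames ∪ R.fnames ⊆ P.fnames
     | .inl _ R => X.fnames ⊆ P.fnames ∪ R.fnames) := by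
  induction h with
  | outS a P => simp [Proc.fnames]
  | inpS a Q P =>
      simp only []
      intro x hx
      have := fnames_subst Q 0 P hx
      simp only [Proc.fnames]
      rcases Finset.mem_union.1 this with h | h
      · exact Finset.mem_union_left _ (Finset.mem_insert_of_mem h)
      · exact Finset.mem_union_right _ h
  | parL Q h ih =>
      rcases hl : ‹Label› with _ | ⟨a, R⟩ | ⟨a, R⟩ <;> subst hl <;>
        simp only [Proc.fnames] at * <;> intro x hx
      · rcases Finset.mem_union.1 hx with h | h
        · exact Finset.mem_union_left _ (ih h)
        · exact Finset.mem_union_right _ h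
      · rcases Finset.mem_union.1 hx with hx | hx
        · rcases Finset.mem_union.1 hx with h | h
          · exact Finset.mem_union_left _ (ih (Finset.mem_union_left _ h))
          · exact Finset.mem_union_right _ h
        · exact Finset.mem_union_left _ (ih (Finset.mem_union_right _ hx))
      · rcases Finset.mem_union.1 hx with hx | hx
        · rcases Finset.mem_union.1 (ih hx) with h | h
          · exact Finset.mem_union_left _ (Finset.mem_union_left _ h)
          · exact Finset.mem_union_right _ h
        · exact Finset.mem_union_left _ (Finset.mem_union_right _ hx)
  | parR P h ih =>
      rcases hl : ‹Label› with _ | ⟨a, R⟩ | ⟨a, R⟩ <;> subst hl <;>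
        simp only [Proc.fnames] at * <;> intro x hx
      · rcases Finset.mem_union.1 hx with h | h
        · exact Finset.mem_union_left _ h
        · exact Finset.mem_union_right _ (ih h)
      · rcases Finset.mem_union.1 hx with hx | hx
        · rcases Finset.mem_union.1 hx with h | h
          · exact Finset.mem_union_left _ h
          · exact Finset.mem_union_right _ (ih (Finset.mem_union_left _ h))
        · exact Finset.mem_union_right _ (ih (Finset.mem_union_right _ hx))
      · rcases Finset.mem_union.1 hx with hx | hx
        · exact Finset.mem_union_left _ (Finset.mem_union_left _ hx)
        · rcases Finset.mem_union.1 (ih hx) with h | h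
          · exact Finset.mem_union_left _ (Finset.mem_union_right _ h)
          · exact Finset.mem_union_right _ h
  | comm1 h1 h2 ih1 ih2 =>
      simp only [Proc.fnames] at *
      intro x hx
      rcases Finset.mem_union.1 hx with h | h
      · exact Finset.mem_union_left _ (ih1 (Finset.mem_union_left _ h))
      · rcases Finset.mem_union.1 (ih2 h) with h | h
        · exact Finset.mem_union_right _ h
        · exact Finset.mem_union_left _ (ih1 (Finset.mem_union_right _ h))
  | comm2 h1 h2 ih1 ih2 =>
      simp only [Proc.fnames] at *
      intro x hx
      rcases Finset.mem_union.1 hx with h | h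
      · rcases Finset.mem_union.1 (ih1 h) with h | h
        · exact Finset.mem_union_left _ h
        · exact Finset.mem_union_right _ (ih2 (Finset.mem_union_right _ h))
      · exact Finset.mem_union_right _ (ih2 (Finset.mem_union_left _ h))

theorem step_tau_fnames {P X : Proc} (h : Step P .tau X) : X.fnames ⊆ P.fnames := by
  rcases step_iff.1 h with ⟨l₀, X₀, h₀, hl, hs⟩
  cases hl
  have := step0_fn h₀
  simp only [] at this
  rw [fnames_scong hs] at this
  exact this

/-! Protocol shapes: machine states. -/

def m1 (A B : Proc) : Proc := .par (.out 0 A) (.inp 0 B)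
def m2 (A A' B : Proc) : Proc := .par (.out 0 A) (.par (.out 1 A') (.inp 0 B))
def m3 (A' C : Proc) : Proc := .par (.out 1 A') (.inp 1 C)

inductive Shp : Proc → Prop
  | s1 (A B) : Shp (m1 A B)
  | s2 (A A' B) : Shp (m2 A A' B)
  | s3 (A' C) : Shp (m3 A' C)

def cnext : Proc → Proc
  | .par (.out 0 A) (.inp 0 B) => B.subst 0 A
  | .par (.out 0 A) (.par (.out 1 A') (.inp 0 B)) => .par (.out 1 A') (B.subst 0 A)
  | .par (.out 1 A') (.inp 1 C) => C.subst 0 A'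
  | _ => .nil

theorem cnext_m1 (A B : Proc) : cnext (m1 A B) = B.subst 0 A := rfl
theorem cnext_m2 (A A' B : Proc) : cnext (m2 A A' B) = .par (.out 1 A') (B.subst 0 A) := rfl
theorem cnext_m3 (A' C : Proc) : cnext (m3 A' C) = C.subst 0 A' := rfl

/-- A shaped state has a τ-step to its canonical successor. -/
theorem shp_step {X : Proc} (h : Shp X) : Step X .tau (cnext X) := by
  cases h with
  | s1 A B =>
      refine Step.struct (SCong.refl _)
        (step0_step (Step0.comm1 (Step0.outS 0 A) (Step0.inpS 0 B A))) ?_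
      rw [cnext_m1]; exact sc_nil_l _
  | s2 A A' B =>
      refine Step.struct (SCong.refl _)
        (step0_step (Step0.comm1 (Step0.outS 0 A) (Step0.parR _ (Step0.inpS 0 B A)))) ?_
      rw [cnext_m2]; exact sc_nil_l _
  | s3 A' C =>
      refine Step.struct (SCong.refl _)
        (step0_step (Step0.comm1 (Step0.outS 1 A') (Step0.inpS 1 C A'))) ?_
      rw [cnext_m3]; exact sc_nil_l _

/-- Determinism of τ-steps of shaped states (struct-free version). -/
theorem shp_det0 {X Z : Proc} (h : Shp X) (hs : Step0 X .tau Z) : SCong Z (cnext X) := by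
  cases h with
  | s1 A B =>
      cases hs with
      | parL _ h => cases h
      | parR _ h => cases h
      | comm1 h1 h2 => cases h1; cases h2; rw [cnext_m1]; exact sc_nil_l _
      | comm2 h1 h2 => cases h1
  | s2 A A' B =>
      cases hs with
      | parL _ h => cases h
      | parR _ h =>
          cases h with
          | parL _ h' => cases h'
          | parR _ h' => cases h'
          | comm1 h1 h2 => cases h1; cases h2
          | comm2 h1 h2 => cases h1
      | comm1 h1 h2 =>
          cases h1
          cases h2 with
          | parL _ h' => cases h'
          | parR _ h' =>
              cases h'
              rw [cnext_m2]
              exact (SCong.parComm _ _).trans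
                ((SCong.parAssoc _ _ _).trans (SCong.parCong (SCong.refl _) (SCong.parNil _)))
      | comm2 h1 h2 => cases h1
  | s3 A' C =>
      cases hs with
      | parL _ h => cases h
      | parR _ h => cases h
      | comm1 h1 h2 => cases h1; cases h2; rw [cnext_m3]; exact sc_nil_l _
      | comm2 h1 h2 => cases h1

theorem shp_lab {X : Proc} (h : Shp X) {l Z} (hs : Step0 X l Z) :
    l = .tau ∨ ∃ A, l = .outl 0 A ∨ l = .inl 0 A ∨ l = .outl 1 A ∨ l = .inl 1 A := by
  cases h with
  | s1 A B =>
      cases hs with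
      | parL _ h => cases h; exact Or.inr ⟨_, Or.inl rfl⟩
      | parR _ h => cases h; exact Or.inr ⟨_, Or.inr (Or.inl rfl)⟩
      | comm1 h1 h2 => exact Or.inl rfl
      | comm2 h1 h2 => exact Or.inl rfl
  | s2 A A' B =>
      cases hs with
      | parL _ h => cases h; exact Or.inr ⟨_, Or.inl rfl⟩
      | parR _ h =>
          cases h with
          | parL _ h' => cases h'; exact Or.inr ⟨_, Or.inr (Or.inr (Or.inl rfl))⟩
          | parR _ h' => cases h'; exact Or.inr ⟨_, Or.inr (Or.inl rfl)⟩
          | comm1 h1 h2 => exact Or.inl rfl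
          | comm2 h1 h2 => exact Or.inl rfl
      | comm1 h1 h2 => exact Or.inl rfl
      | comm2 h1 h2 => exact Or.inl rfl
  | s3 A' C =>
      cases hs with
      | parL _ h => cases h; exact Or.inr ⟨_, Or.inr (Or.inr (Or.inl rfl))⟩
      | parR _ h => cases h; exact Or.inr ⟨_, Or.inr (Or.inr (Or.inr rfl))⟩
      | comm1 h1 h2 => exact Or.inl rfl
      | comm2 h1 h2 => exact Or.inl rfl

/-- Determinism of τ-steps of shaped states. -/
theorem shp_tau {X Z : Proc} (h : Shp X) (hs : Step X .tau Z) : SCong Z (cnext X) := by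
  rcases step_iff.1 hs with ⟨l₀, Z₀, h₀, hl, hsc⟩
  cases hl
  exact hsc.symm.trans (shp_det0 h h₀)

/-- Shaped states have no unhidden barbs. -/
theorem shp_barb {X : Proc} (h : Shp X) (α : Barb) :
    ¬ StrongBarb ({hdN, cN} : Set Name) X α := by
  have hdc : (hdN : ℕ) = 0 ∧ (cN : ℕ) = 1 := ⟨rfl, rfl⟩
  cases α with
  | inb a =>
      rintro ⟨ha, A, Z, hst⟩
      rcases step_iff.1 hst with ⟨l₀, Z₀, h₀, hl, _⟩
      cases hl
      rcases shp_lab h h₀ with h' | ⟨B, h' | h' | h' | h'⟩ <;> cases h' <;>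
        exact ha (by simp [hdN, cN])
  | outb a =>
      rintro ⟨ha, A, Z, hst⟩
      rcases step_iff.1 hst with ⟨l₀, Z₀, h₀, hl, _⟩
      cases hl with
      | out _ hc =>
        rcases shp_lab h h₀ with h' | ⟨B, h' | h' | h' | h'⟩ <;> cases h' <;>
          exact ha (by simp [hdN, cN])

theorem barb_scong {H P Q α} (h : SCong P Q) (hb : StrongBarb H P α) : StrongBarb H Q α := by
  cases α with
  | inb a =>
      obtain ⟨ha, A, Z, hst⟩ := hb
      exact ⟨ha, A, Z, Step.struct h.symm hst (SCong.refl _)⟩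
  | outb a =>
      obtain ⟨ha, A, Z, hst⟩ := hb
      exact ⟨ha, A, Z, Step.struct h.symm hst (SCong.refl _)⟩

theorem barb_par {H P S α} :
    StrongBarb H (.par P S) α ↔ StrongBarb H P α ∨ StrongBarb H S α := by
  constructor
  · intro hb
    cases α with
    | inb a =>
        obtain ⟨ha, A, Z, hst⟩ := hb
        rcases step_iff.1 hst with ⟨l₀, Z₀, h₀, hl, _⟩
        cases hl
        cases h₀ with
        | parL _ h => exact Or.inl ⟨ha, _, _, step0_step h⟩
        | parR _ h => exact Or.inr ⟨ha, _, _, step0_step h⟩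
    | outb a =>
        obtain ⟨ha, A, Z, hst⟩ := hb
        rcases step_iff.1 hst with ⟨l₀, Z₀, h₀, hl, _⟩
        cases hl with
        | out _ hc =>
          cases h₀ with
          | parL _ h => exact Or.inl ⟨ha, _, _, step0_step h⟩
          | parR _ h => exact Or.inr ⟨ha, _, _, step0_step h⟩
  · intro hb
    cases α with
    | inb a =>
        rcases hb with ⟨ha, A, Z, hst⟩ | ⟨ha, A, Z, hst⟩
        · exact ⟨ha, A, _, Step.parL _ hst⟩
        · exact ⟨ha, A, _, Step.parR _ hst⟩
    | outb a =>
        rcases hb with ⟨ha, A, Z, hst⟩ | ⟨ha, A, Z, hst⟩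
        · exact ⟨ha, A, _, Step.parL _ hst⟩
        · exact ⟨ha, A, _, Step.parR _ hst⟩

theorem nil_no_step {l X} (h : Step .nil l X) : False := by
  rcases step_iff.1 h with ⟨l₀, X₀, h₀, _, _⟩
  cases h₀

theorem nil_no_barb {H α} (h : StrongBarb H .nil α) : False := by
  cases α <;> · obtain ⟨_, _, _, hst⟩ := h; exact nil_no_step hst

/-- The central inversion lemma: a τ-step of `X ∥ S` with `X` a machine state and
`S` a context avoiding the hidden names is either a machine step or a context step. -/
theorem par_inv {X S Z : Proc} (hX : Shp X)
    (h0 : (0 : Name) ∉ S.fnames) (h1 : (1 : Name) ∉ S.fnames)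
    (h : Step (.par X S) .tau Z) :
    SCong Z (.par (cnext X) S) ∨ ∃ S', Step0 S .tau S' ∧ SCong Z (.par X S') := by
  rcases step_iff.1 h with ⟨l₀, Z₀, h₀, hl, hsc⟩
  cases hl
  cases h₀ with
  | parL _ h => exact Or.inl (hsc.symm.trans (SCong.parCong (shp_det0 hX h) (SCong.refl _)))
  | parR _ h => exact Or.inr ⟨_, h, hsc.symm⟩
  | comm1 hA hB =>
      exfalso
      have := step0_inl_name hB
      rcases shp_lab hX hA with h' | ⟨B, h' | h' | h' | h'⟩ <;> cases h'
      · exact h0 this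
      · exact h1 this
  | comm2 hA hB =>
      exfalso
      have := step0_out_name hB
      rcases shp_lab hX hA with h' | ⟨B, h' | h' | h' | h'⟩ <;> cases h'
      · exact h0 this
      · exact h1 this

/-! ### The small-step machine (a fine-grained version of `Turing.ToPartrec.step`) -/

open Turing.ToPartrec in
inductive Cfg2 : Type
  | normal : Turing.ToPartrec.Code → Turing.ToPartrec.Cont → List ℕ → Cfg2
  | ret : Turing.ToPartrec.Cont → List ℕ → Cfg2
  | halt : List ℕ → Cfg2

open Turing.ToPartrec in
def step2 : Cfg2 → Option Cfg2
  | .normal .zero' k v => some (.ret k (0 :: v))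
  | .normal .succ k v => some (.ret k [v.headI.succ])
  | .normal .tail k v => some (.ret k v.tail)
  | .normal (.cons f fs) k v => some (.normal f (.cons₁ fs v k) v)
  | .normal (.comp f g) k v => some (.normal g (.comp f k) v)
  | .normal (.case f g) k v =>
      some (match v.headI with
        | 0 => .normal f k v.tail
        | n+1 => .normal g k (n :: v.tail))
  | .normal (.fix f) k v => some (.normal f (.fix f k) v)
  | .ret .halt v => some (.halt v)
  | .ret (.cons₁ fs _as k) v => some (.normal fs (.cons₂ v k) _as)
  | .ret (.cons₂ ns k) v => some (.ret k (ns.headI :: v))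
  | .ret (.comp f k) v => some (.normal f k v)
  | .ret (.fix f k) v =>
      some (if v.headI = 0 then .ret k v.tail else .normal f (.fix f k) v.tail)
  | .halt _ => none

/-! ### HOcore process encodings -/

/-- Scott encoding of `0` / `[]`. -/
def natZ : Proc := .inp 0 (.inp 1 (.pvar 1))

def lNil : Proc := natZ

/-- raw successor template -/
def natST (m : Proc) : Proc := .inp 0 (.inp 1 (.par (.out 0 m) (.pvar 0)))

/-- raw cons template -/
def lConsT (h t : Proc) : Proc :=
  .inp 0 (.inp 1 (.par (.out 0 h) (.par (.out 1 t) (.pvar 0))))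

def eN : ℕ → Proc
  | 0 => natZ
  | n+1 => natST (eN n)

def eL : List ℕ → Proc
  | [] => lNil
  | n :: v => lConsT (eN n) (eL v)

/-- body template for `Cont.cons₂`: free variable `#0` is the returned value,
`NS` is the stored list, `KK0`/`KK2` stand for the stored continuation value
(as seen at depth 0 resp. depth 2). -/
def c2body (NS KK0 KK2 : Proc) : Proc :=
  .par (.out 0 (.par (.out 0 (lConsT natZ (.pvar 2))) KK0))
    (.par (.out 1 (.inp 0 (.inp 1 (.par (.out 0 (lConsT (.pvar 3) (.pvar 4))) KK2)))) NS)

/-- dispatch template for `Cont.fix`: free variables `#1` = the self-copy (GG value),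
`#0` = the returned value; `K0`/`K2` stand for the stored continuation at depths 0/2,
`Cf` is the (closed) code value of the fix body. -/
def dispT (K0 K2 Cf : Proc) : Proc :=
  .par (.out 0 (.par (.out 0 lNil) K0))
    (.par (.out 1 (.inp 0 (.inp 1
      (.par (.out 0 (.par (.out 0 (.pvar 0)) K2))
        (.par (.out 1 (.inp 0
          (.par (.out 0 (.inp 0 (.par (.out 0 (.pvar 5)) (.par (.out 1 (.pvar 0)) (.pvar 5)))))
            (.par (.out 1 (.pvar 1)) Cf))))
        (.pvar 1))))))
    (.pvar 0))

open Turing.ToPartrec in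
/-- body of the code value: free variables `#1` = continuation value, `#0` = argument value. -/
def bodyN (W : Proc) : Turing.ToPartrec.Code → Proc
  | .zero' => .par (.out 0 (lConsT natZ (.pvar 2))) (.pvar 1)
  | .succ => .par (.out 0 (.par (.out 0 (lConsT (natST natZ) lNil)) (.pvar 1)))
      (.par (.out 1 (.inp 0 (.inp 1
        (.par (.out 0 (lConsT (natST (.pvar 5)) lNil)) (.pvar 3)))))
      (.pvar 0))
  | .tail => .par (.out 0 (.par (.out 0 lNil) (.pvar 1)))
      (.par (.out 1 (.inp 0 (.inp 1 (.par (.out 0 (.pvar 0)) (.pvar 3)))))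
      (.pvar 0))
  | .cons f fs => .par (.out 0 (.inp 0
      (.par (.out 0 (.inp 0 (c2body (.pvar 1) (.pvar 3) (.pvar 5))))
        (.par (.out 1 (.pvar 1)) (.inp 0 (.inp 1 (bodyN W fs)))))))
      (.par (.out 1 (.pvar 0)) (.inp 0 (.inp 1 (bodyN W f))))
  | .comp f g => .par (.out 0 (.inp 0
      (.par (.out 0 (.pvar 2)) (.par (.out 1 (.pvar 0)) (.inp 0 (.inp 1 (bodyN W f)))))))
      (.par (.out 1 (.pvar 0)) (.inp 0 (.inp 1 (bodyN W g))))
  | .case f g => .par (.out 0 (.par (.out 0 (.pvar 1))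
        (.par (.out 1 lNil) (.inp 0 (.inp 1 (bodyN W f))))))
      (.par (.out 1 (.inp 0 (.inp 1
        (.par (.out 0 (.par (.out 0 (.pvar 3)) (.par (.out 1 (.pvar 0))
            (.inp 0 (.inp 1 (bodyN W f))))))
          (.par (.out 1 (.inp 0 (.par (.out 0 (.pvar 4))
            (.par (.out 1 (lConsT (.pvar 2) (.pvar 3))) (.inp 0 (.inp 1 (bodyN W g)))))))
          (.pvar 1))))))
      (.pvar 0))
  | .fix f => .par (.out 0 (.inp 0
      (.par (.out 0 (.inp 0 (.inp 1 (dispT (.pvar 4) (.pvar 6) (.inp 0 (.inp 1 (bodyN W f)))))))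
        (.par (.out 1 (.pvar 0))
          (.inp 0 (.inp 1 (dispT (.pvar 4) (.pvar 6) (.inp 0 (.inp 1 (bodyN W f))))))))))
      (.par (.out 1 (.pvar 0)) (.inp 0 (.inp 1 (bodyN W f))))

/-- code value -/
def CV (W : Proc) (c : Turing.ToPartrec.Code) : Proc := .inp 0 (.inp 1 (bodyN W c))

open Turing.ToPartrec in
/-- body of the continuation value: free variable `#0` is the returned value. -/
def bodyR (W : Proc) : Turing.ToPartrec.Cont → Proc
  | .halt => W
  | .cons₁ fs _as k =>
      .par (.out 0 (.inp 0 (c2body (.pvar 1) (.inp 0 (bodyR W k)) (.inp 0 (bodyR W k)))))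
        (.par (.out 1 (eL _as)) (CV W fs))
  | .cons₂ ns k => c2body (eL ns) (.inp 0 (bodyR W k)) (.inp 0 (bodyR W k))
  | .comp f k =>
      .par (.out 0 (.inp 0 (bodyR W k))) (.par (.out 1 (.pvar 0)) (CV W f))
  | .fix f k =>
      .par (.out 0 (.inp 0 (.inp 1 (dispT (.inp 0 (bodyR W k)) (.inp 0 (bodyR W k)) (CV W f)))))
        (.par (.out 1 (.pvar 0))
          (.inp 0 (.inp 1 (dispT (.inp 0 (bodyR W k)) (.inp 0 (bodyR W k)) (CV W f)))))

/-- continuation value -/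
def KV (W : Proc) (k : Turing.ToPartrec.Cont) : Proc := .inp 0 (bodyR W k)

/-- realization of a machine configuration as an HOcore process -/
def entry (W : Proc) : Cfg2 → Proc
  | .normal c k v => m2 (KV W k) (eL v) (.inp 1 (bodyN W c))
  | .ret k v => m1 (eL v) (bodyR W k)
  | .halt _ => W

open Turing.ToPartrec in
def lenN : Turing.ToPartrec.Code → List ℕ → ℕ
  | .zero', _ => 0
  | .succ, [] => 2
  | .succ, _ :: _ => 4
  | .tail, [] => 2
  | .tail, _ :: _ => 4
  | .cons _ _, _ => 0
  | .comp _ _, _ => 0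
  | .case _ _, [] => 2
  | .case _ _, 0 :: _ => 6
  | .case _ _, (_+1) :: _ => 7
  | .fix _, _ => 0

open Turing.ToPartrec in
def lenR : Turing.ToPartrec.Cont → List ℕ → ℕ
  | .halt, _ => 1
  | .cons₁ _ _ _, _ => 1
  | .cons₂ [] _, _ => 3
  | .cons₂ (_ :: _) _, _ => 5
  | .comp _ _, _ => 1
  | .fix _ _, [] => 5
  | .fix _ _, (0 :: _) => 9
  | .fix _ _, ((_+1) :: _) => 10

def len : Cfg2 → ℕ
  | .normal c _ v => 2 + lenN c v
  | .ret k v => lenR k v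
  | .halt _ => 0

/-- A chain of `n` deterministic machine micro-steps from `X` to `Y`. -/
def Chain (X : Proc) (n : ℕ) (Y : Proc) : Prop :=
  (∀ i < n, Shp (cnext^[i] X)) ∧ cnext^[n] X = Y

theorem chain_zero (X : Proc) : Chain X 0 X := ⟨fun i h => absurd h (by simp), rfl⟩

theorem chain_cons {X Y : Proc} {n : ℕ} (h : Shp X) (hn : Chain (cnext X) n Y) :
    Chain X (n+1) Y := by
  constructor
  · intro i hi
    cases i with
    | zero => exact h
    | succ j =>
        rw [Function.iterate_succ_apply]
        exact hn.1 j (Nat.lt_of_succ_lt_succ hi)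
  · rw [Function.iterate_succ_apply]
    exact hn.2

theorem closed_subst {P : Proc} (h : CA 0 P) : ∀ (k : ℕ) (S : Proc), Proc.subst P k S = P :=
  fun k _ => subst_of_CA h (Nat.zero_le k)

theorem closed_lift {P : Proc} (h : CA 0 P) : ∀ (d k : ℕ), Proc.lift d k P = P :=
  fun _ k => lift_of_CA h (Nat.zero_le k)

theorem CA_natZ (k : ℕ) : CA k natZ := by simp [natZ, CA]

theorem CA_eN (n : ℕ) : ∀ k, CA k (eN n) := by
  induction n with
  | zero => exact CA_natZ
  | succ n ih => intro k; simpa [eN, natST, CA] using ih (k+2)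

theorem CA_eL (v : List ℕ) : ∀ k, CA k (eL v) := by
  induction v with
  | nil => exact CA_natZ
  | cons n v ih =>
      intro k
      simp [eL, lConsT, CA]
      exact ⟨CA_eN n _, ih _⟩

theorem CA_bodyN (W : Proc) (c : Turing.ToPartrec.Code) : CA 2 (bodyN W c) := by
  induction c with
  | zero' => ?_
  | succ => ?_
  | tail => ?_
  | cons f fs ihf ihfs => ?_
  | comp f g ihf ihg => ?_
  | case f g ihf ihg => ?_
  | fix f ih => ?_
  all_goals
    simp only [bodyN, c2body, dispT, lConsT, natST, CA, natZ, lNil]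
  all_goals
    repeat' apply And.intro
  all_goals
    first
      | omega
      | trivial
      | exact CA.mono (by omega) ihf
      | exact CA.mono (by omega) ihfs
      | exact CA.mono (by omega) ihg
      | exact CA.mono (by omega) ih

theorem CA_CV (W : Proc) (c) : ∀ k, CA k (CV W c) := by
  intro k
  have := CA_bodyN W c
  simp only [CV, CA]
  exact CA.mono (by omega) this

theorem CA_bodyR {W : Proc} (hW : CA 0 W) (k : Turing.ToPartrec.Cont) : CA 1 (bodyR W k) := by
  induction k with
  | halt => exact CA.mono (by omega) hW
  | cons₁ fs as k ih => ?_
  | cons₂ ns k ih => ?_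
  | comp f k ih => ?_
  | fix f k ih => ?_
  all_goals
    simp only [bodyR, c2body, dispT, lConsT, CA, natZ, lNil]
  all_goals
    repeat' apply And.intro
  all_goals
    first
      | omega
      | trivial
      | exact CA.mono (by omega) ih
      | exact CA.mono (by omega) (CA_eL _ 0)
      | exact CA.mono (by omega) (CA_CV W _ 0)

theorem CA_KV {W : Proc} (hW : CA 0 W) (k : Turing.ToPartrec.Cont) : ∀ j, CA j (KV W k) := by
  intro j
  simp only [KV, CA]
  exact CA.mono (by omega) (CA_bodyR hW k)

theorem chain_end {X Y : Proc} (h : X = Y) : Chain X 0 Y :=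
  ⟨fun i hi => absurd hi (by simp), h⟩

@[simp] theorem cnext_eq1 (A B : Proc) :
    cnext (.par (.out 0 A) (.inp 0 B)) = B.subst 0 A := rfl
@[simp] theorem cnext_eq2 (A A' B : Proc) :
    cnext (.par (.out 0 A) (.par (.out 1 A') (.inp 0 B))) = .par (.out 1 A') (B.subst 0 A) := rfl
@[simp] theorem cnext_eq3 (A' C : Proc) :
    cnext (.par (.out 1 A') (.inp 1 C)) = C.subst 0 A' := rfl

section Traj
variable {W : Proc} (hW : CA 0 W)
include hW

theorem hR (kk : Turing.ToPartrec.Cont) (j d : ℕ) (h : 1 ≤ j) :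
    Proc.lift d j (bodyR W kk) = bodyR W kk := lift_of_CA (CA_bodyR hW kk) h
theorem hR' (kk : Turing.ToPartrec.Cont) (j : ℕ) (S : Proc) (h : 1 ≤ j) :
    Proc.subst (bodyR W kk) j S = bodyR W kk := subst_of_CA (CA_bodyR hW kk) h
theorem hN (c : Turing.ToPartrec.Code) (j d : ℕ) (h : 2 ≤ j) :
    Proc.lift d j (bodyN W c) = bodyN W c := lift_of_CA (CA_bodyN W c) h
theorem hN' (c : Turing.ToPartrec.Code) (j : ℕ) (S : Proc) (h : 2 ≤ j) :
    Proc.subst (bodyN W c) j S = bodyN W c := subst_of_CA (CA_bodyN W c) h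
theorem hE (v : List ℕ) (j : ℕ) (S : Proc) : Proc.subst (eL v) j S = eL v :=
  closed_subst (CA_eL v 0) j S
theorem hEl (v : List ℕ) (d j : ℕ) : Proc.lift d j (eL v) = eL v :=
  closed_lift (CA_eL v 0) d j
theorem hEn (n : ℕ) (j : ℕ) (S : Proc) : Proc.subst (eN n) j S = eN n :=
  closed_subst (CA_eN n 0) j S
theorem hEnl (n : ℕ) (d j : ℕ) : Proc.lift d j (eN n) = eN n :=
  closed_lift (CA_eN n 0) d j
theorem hWs (j : ℕ) (S : Proc) : Proc.subst W j S = W := closed_subst hW j S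
theorem hWl (d j : ℕ) : Proc.lift d j W = W := closed_lift hW d j

theorem traj_zero (k v) :
    Chain (entry W (.normal .zero' k v)) (len (.normal .zero' k v))
      (entry W (.ret k (0 :: v))) := by
  refine chain_cons (Shp.s2 _ _ _) (chain_cons ?_ (chain_end ?_))
  · simp [entry, m1, m2, m3, bodyN, bodyR, KV, CV, eL, eN, lConsT, natST, natZ, lNil,
      Proc.subst, Proc.lift, hR hW, hR' hW, hN hW, hN' hW, hE hW, hEl hW, hEn hW, hEnl hW, hWs hW, hWl hW]
    exact Shp.s3 _ _
  · simp [entry, m1, m2, m3, bodyN, bodyR, KV, CV, eL, eN, lConsT, natST, natZ, lNil,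
      Proc.subst, Proc.lift, hR hW, hR' hW, hN hW, hN' hW, hE hW, hEl hW, hEn hW, hEnl hW, hWs hW, hWl hW]

end Traj

section Traj2
variable {W : Proc} (hW : CA 0 W)
include hW

theorem traj_succ_nil (k) :
    Chain (entry W (.normal .succ k [])) 4 (entry W (.ret k [Nat.succ 0])) := by
  refine chain_cons ?_ (chain_cons ?_ (chain_cons ?_ (chain_cons ?_ (chain_end ?_))))
  all_goals first
    | (simp [entry, m1, m2, m3, bodyN, bodyR, KV, CV, eL, eN, lConsT, natST, natZ, lNil,
      Proc.subst, Proc.lift, c2body, dispT, hR hW, hR' hW, hN hW, hN' hW, hE hW, hEl hW,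
      hEn hW, hEnl hW, hWs hW, hWl hW]
       first | exact Shp.s1 _ _ | exact Shp.s2 _ _ _ | exact Shp.s3 _ _)
    | (simp [entry, m1, m2, m3, bodyN, bodyR, KV, CV, eL, eN, lConsT, natST, natZ, lNil,
      Proc.subst, Proc.lift, c2body, dispT, hR hW, hR' hW, hN hW, hN' hW, hE hW, hEl hW,
      hEn hW, hEnl hW, hWs hW, hWl hW])

theorem traj_succ_cons (k h t) :
    Chain (entry W (.normal .succ k (h::t))) 6 (entry W (.ret k [Nat.succ h])) := by
  refine chain_cons ?_ (chain_cons ?_ (chain_cons ?_ (chain_cons ?_ (chain_cons ?_ (chain_cons ?_ (chain_end ?_))))))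
  all_goals first
    | (simp [entry, m1, m2, m3, bodyN, bodyR, KV, CV, eL, eN, lConsT, natST, natZ, lNil,
      Proc.subst, Proc.lift, c2body, dispT, hR hW, hR' hW, hN hW, hN' hW, hE hW, hEl hW,
      hEn hW, hEnl hW, hWs hW, hWl hW]
       first | exact Shp.s1 _ _ | exact Shp.s2 _ _ _ | exact Shp.s3 _ _)
    | (simp [entry, m1, m2, m3, bodyN, bodyR, KV, CV, eL, eN, lConsT, natST, natZ, lNil,
      Proc.subst, Proc.lift, c2body, dispT, hR hW, hR' hW, hN hW, hN' hW, hE hW, hEl hW,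
      hEn hW, hEnl hW, hWs hW, hWl hW])

theorem traj_tail_nil (k) :
    Chain (entry W (.normal .tail k [])) 4 (entry W (.ret k [])) := by
  refine chain_cons ?_ (chain_cons ?_ (chain_cons ?_ (chain_cons ?_ (chain_end ?_))))
  all_goals first
    | (simp [entry, m1, m2, m3, bodyN, bodyR, KV, CV, eL, eN, lConsT, natST, natZ, lNil,
      Proc.subst, Proc.lift, c2body, dispT, hR hW, hR' hW, hN hW, hN' hW, hE hW, hEl hW,
      hEn hW, hEnl hW, hWs hW, hWl hW]
       first | exact Shp.s1 _ _ | exact Shp.s2 _ _ _ | exact Shp.s3 _ _)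
    | (simp [entry, m1, m2, m3, bodyN, bodyR, KV, CV, eL, eN, lConsT, natST, natZ, lNil,
      Proc.subst, Proc.lift, c2body, dispT, hR hW, hR' hW, hN hW, hN' hW, hE hW, hEl hW,
      hEn hW, hEnl hW, hWs hW, hWl hW])

theorem traj_tail_cons (k h t) :
    Chain (entry W (.normal .tail k (h::t))) 6 (entry W (.ret k t)) := by
  refine chain_cons ?_ (chain_cons ?_ (chain_cons ?_ (chain_cons ?_ (chain_cons ?_ (chain_cons ?_ (chain_end ?_))))))
  all_goals first
    | (simp [entry, m1, m2, m3, bodyN, bodyR, KV, CV, eL, eN, lConsT, natST, natZ, lNil,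
      Proc.subst, Proc.lift, c2body, dispT, hR hW, hR' hW, hN hW, hN' hW, hE hW, hEl hW,
      hEn hW, hEnl hW, hWs hW, hWl hW]
       first | exact Shp.s1 _ _ | exact Shp.s2 _ _ _ | exact Shp.s3 _ _)
    | (simp [entry, m1, m2, m3, bodyN, bodyR, KV, CV, eL, eN, lConsT, natST, natZ, lNil,
      Proc.subst, Proc.lift, c2body, dispT, hR hW, hR' hW, hN hW, hN' hW, hE hW, hEl hW,
      hEn hW, hEnl hW, hWs hW, hWl hW])

theorem traj_cons (f fs k v) :
    Chain (entry W (.normal (.cons f fs) k v)) 2 (entry W (.normal f (.cons₁ fs v k) v)) := by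
  refine chain_cons ?_ (chain_cons ?_ (chain_end ?_))
  all_goals first
    | (simp [entry, m1, m2, m3, bodyN, bodyR, KV, CV, eL, eN, lConsT, natST, natZ, lNil,
      Proc.subst, Proc.lift, c2body, dispT, hR hW, hR' hW, hN hW, hN' hW, hE hW, hEl hW,
      hEn hW, hEnl hW, hWs hW, hWl hW]
       first | exact Shp.s1 _ _ | exact Shp.s2 _ _ _ | exact Shp.s3 _ _)
    | (simp [entry, m1, m2, m3, bodyN, bodyR, KV, CV, eL, eN, lConsT, natST, natZ, lNil,
      Proc.subst, Proc.lift, c2body, dispT, hR hW, hR' hW, hN hW, hN' hW, hE hW, hEl hW,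
      hEn hW, hEnl hW, hWs hW, hWl hW])

theorem traj_comp (f g k v) :
    Chain (entry W (.normal (.comp f g) k v)) 2 (entry W (.normal g (.comp f k) v)) := by
  refine chain_cons ?_ (chain_cons ?_ (chain_end ?_))
  all_goals first
    | (simp [entry, m1, m2, m3, bodyN, bodyR, KV, CV, eL, eN, lConsT, natST, natZ, lNil,
      Proc.subst, Proc.lift, c2body, dispT, hR hW, hR' hW, hN hW, hN' hW, hE hW, hEl hW,
      hEn hW, hEnl hW, hWs hW, hWl hW]
       first | exact Shp.s1 _ _ | exact Shp.s2 _ _ _ | exact Shp.s3 _ _)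
    | (simp [entry, m1, m2, m3, bodyN, bodyR, KV, CV, eL, eN, lConsT, natST, natZ, lNil,
      Proc.subst, Proc.lift, c2body, dispT, hR hW, hR' hW, hN hW, hN' hW, hE hW, hEl hW,
      hEn hW, hEnl hW, hWs hW, hWl hW])

theorem traj_case_nil (f g k) :
    Chain (entry W (.normal (.case f g) k [])) 4 (entry W (.normal f k [])) := by
  refine chain_cons ?_ (chain_cons ?_ (chain_cons ?_ (chain_cons ?_ (chain_end ?_))))
  all_goals first
    | (simp [entry, m1, m2, m3, bodyN, bodyR, KV, CV, eL, eN, lConsT, natST, natZ, lNil,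
      Proc.subst, Proc.lift, c2body, dispT, hR hW, hR' hW, hN hW, hN' hW, hE hW, hEl hW,
      hEn hW, hEnl hW, hWs hW, hWl hW]
       first | exact Shp.s1 _ _ | exact Shp.s2 _ _ _ | exact Shp.s3 _ _)
    | (simp [entry, m1, m2, m3, bodyN, bodyR, KV, CV, eL, eN, lConsT, natST, natZ, lNil,
      Proc.subst, Proc.lift, c2body, dispT, hR hW, hR' hW, hN hW, hN' hW, hE hW, hEl hW,
      hEn hW, hEnl hW, hWs hW, hWl hW])

theorem traj_case_zero (f g k t) :
    Chain (entry W (.normal (.case f g) k (0::t))) 8 (entry W (.normal f k t)) := by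
  refine chain_cons ?_ (chain_cons ?_ (chain_cons ?_ (chain_cons ?_ (chain_cons ?_ (chain_cons ?_ (chain_cons ?_ (chain_cons ?_ (chain_end ?_))))))))
  all_goals first
    | (simp [entry, m1, m2, m3, bodyN, bodyR, KV, CV, eL, eN, lConsT, natST, natZ, lNil,
      Proc.subst, Proc.lift, c2body, dispT, hR hW, hR' hW, hN hW, hN' hW, hE hW, hEl hW,
      hEn hW, hEnl hW, hWs hW, hWl hW]
       first | exact Shp.s1 _ _ | exact Shp.s2 _ _ _ | exact Shp.s3 _ _)
    | (simp [entry, m1, m2, m3, bodyN, bodyR, KV, CV, eL, eN, lConsT, natST, natZ, lNil,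
      Proc.subst, Proc.lift, c2body, dispT, hR hW, hR' hW, hN hW, hN' hW, hE hW, hEl hW,
      hEn hW, hEnl hW, hWs hW, hWl hW])

theorem traj_case_succ (f g k p t) :
    Chain (entry W (.normal (.case f g) k ((p+1)::t))) 9 (entry W (.normal g k (p::t))) := by
  refine chain_cons ?_ (chain_cons ?_ (chain_cons ?_ (chain_cons ?_ (chain_cons ?_ (chain_cons ?_ (chain_cons ?_ (chain_cons ?_ (chain_cons ?_ (chain_end ?_)))))))))
  all_goals first
    | (simp [entry, m1, m2, m3, bodyN, bodyR, KV, CV, eL, eN, lConsT, natST, natZ, lNil,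
      Proc.subst, Proc.lift, c2body, dispT, hR hW, hR' hW, hN hW, hN' hW, hE hW, hEl hW,
      hEn hW, hEnl hW, hWs hW, hWl hW]
       first | exact Shp.s1 _ _ | exact Shp.s2 _ _ _ | exact Shp.s3 _ _)
    | (simp [entry, m1, m2, m3, bodyN, bodyR, KV, CV, eL, eN, lConsT, natST, natZ, lNil,
      Proc.subst, Proc.lift, c2body, dispT, hR hW, hR' hW, hN hW, hN' hW, hE hW, hEl hW,
      hEn hW, hEnl hW, hWs hW, hWl hW])

theorem traj_fix (f k v) :
    Chain (entry W (.normal (.fix f) k v)) 2 (entry W (.normal f (.fix f k) v)) := by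
  refine chain_cons ?_ (chain_cons ?_ (chain_end ?_))
  all_goals first
    | (simp [entry, m1, m2, m3, bodyN, bodyR, KV, CV, eL, eN, lConsT, natST, natZ, lNil,
      Proc.subst, Proc.lift, c2body, dispT, hR hW, hR' hW, hN hW, hN' hW, hE hW, hEl hW,
      hEn hW, hEnl hW, hWs hW, hWl hW]
       first | exact Shp.s1 _ _ | exact Shp.s2 _ _ _ | exact Shp.s3 _ _)
    | (simp [entry, m1, m2, m3, bodyN, bodyR, KV, CV, eL, eN, lConsT, natST, natZ, lNil,
      Proc.subst, Proc.lift, c2body, dispT, hR hW, hR' hW, hN hW, hN' hW, hE hW, hEl hW,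
      hEn hW, hEnl hW, hWs hW, hWl hW])

theorem traj_rhalt (v) :
    Chain (entry W (.ret .halt v)) 1 (entry W (.halt v)) := by
  refine chain_cons ?_ (chain_end ?_)
  all_goals first
    | (simp [entry, m1, m2, m3, bodyN, bodyR, KV, CV, eL, eN, lConsT, natST, natZ, lNil,
      Proc.subst, Proc.lift, c2body, dispT, hR hW, hR' hW, hN hW, hN' hW, hE hW, hEl hW,
      hEn hW, hEnl hW, hWs hW, hWl hW]
       first | exact Shp.s1 _ _ | exact Shp.s2 _ _ _ | exact Shp.s3 _ _)
    | (simp [entry, m1, m2, m3, bodyN, bodyR, KV, CV, eL, eN, lConsT, natST, natZ, lNil,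
      Proc.subst, Proc.lift, c2body, dispT, hR hW, hR' hW, hN hW, hN' hW, hE hW, hEl hW,
      hEn hW, hEnl hW, hWs hW, hWl hW])

theorem traj_rcons1 (fs as k v) :
    Chain (entry W (.ret (.cons₁ fs as k) v)) 1 (entry W (.normal fs (.cons₂ v k) as)) := by
  refine chain_cons ?_ (chain_end ?_)
  all_goals first
    | (simp [entry, m1, m2, m3, bodyN, bodyR, KV, CV, eL, eN, lConsT, natST, natZ, lNil,
      Proc.subst, Proc.lift, c2body, dispT, hR hW, hR' hW, hN hW, hN' hW, hE hW, hEl hW,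
      hEn hW, hEnl hW, hWs hW, hWl hW]
       first | exact Shp.s1 _ _ | exact Shp.s2 _ _ _ | exact Shp.s3 _ _)
    | (simp [entry, m1, m2, m3, bodyN, bodyR, KV, CV, eL, eN, lConsT, natST, natZ, lNil,
      Proc.subst, Proc.lift, c2body, dispT, hR hW, hR' hW, hN hW, hN' hW, hE hW, hEl hW,
      hEn hW, hEnl hW, hWs hW, hWl hW])

theorem traj_rcons2_nil (k v) :
    Chain (entry W (.ret (.cons₂ [] k) v)) 3 (entry W (.ret k (0::v))) := by
  refine chain_cons ?_ (chain_cons ?_ (chain_cons ?_ (chain_end ?_)))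
  all_goals first
    | (simp [entry, m1, m2, m3, bodyN, bodyR, KV, CV, eL, eN, lConsT, natST, natZ, lNil,
      Proc.subst, Proc.lift, c2body, dispT, hR hW, hR' hW, hN hW, hN' hW, hE hW, hEl hW,
      hEn hW, hEnl hW, hWs hW, hWl hW]
       first | exact Shp.s1 _ _ | exact Shp.s2 _ _ _ | exact Shp.s3 _ _)
    | (simp [entry, m1, m2, m3, bodyN, bodyR, KV, CV, eL, eN, lConsT, natST, natZ, lNil,
      Proc.subst, Proc.lift, c2body, dispT, hR hW, hR' hW, hN hW, hN' hW, hE hW, hEl hW,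
      hEn hW, hEnl hW, hWs hW, hWl hW])

theorem traj_rcons2_cons (n ns k v) :
    Chain (entry W (.ret (.cons₂ (n::ns) k) v)) 5 (entry W (.ret k (n::v))) := by
  refine chain_cons ?_ (chain_cons ?_ (chain_cons ?_ (chain_cons ?_ (chain_cons ?_ (chain_end ?_)))))
  all_goals first
    | (simp [entry, m1, m2, m3, bodyN, bodyR, KV, CV, eL, eN, lConsT, natST, natZ, lNil,
      Proc.subst, Proc.lift, c2body, dispT, hR hW, hR' hW, hN hW, hN' hW, hE hW, hEl hW,
      hEn hW, hEnl hW, hWs hW, hWl hW]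
       first | exact Shp.s1 _ _ | exact Shp.s2 _ _ _ | exact Shp.s3 _ _)
    | (simp [entry, m1, m2, m3, bodyN, bodyR, KV, CV, eL, eN, lConsT, natST, natZ, lNil,
      Proc.subst, Proc.lift, c2body, dispT, hR hW, hR' hW, hN hW, hN' hW, hE hW, hEl hW,
      hEn hW, hEnl hW, hWs hW, hWl hW])

theorem traj_rcomp (f k v) :
    Chain (entry W (.ret (.comp f k) v)) 1 (entry W (.normal f k v)) := by
  refine chain_cons ?_ (chain_end ?_)
  all_goals first
    | (simp [entry, m1, m2, m3, bodyN, bodyR, KV, CV, eL, eN, lConsT, natST, natZ, lNil,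
      Proc.subst, Proc.lift, c2body, dispT, hR hW, hR' hW, hN hW, hN' hW, hE hW, hEl hW,
      hEn hW, hEnl hW, hWs hW, hWl hW]
       first | exact Shp.s1 _ _ | exact Shp.s2 _ _ _ | exact Shp.s3 _ _)
    | (simp [entry, m1, m2, m3, bodyN, bodyR, KV, CV, eL, eN, lConsT, natST, natZ, lNil,
      Proc.subst, Proc.lift, c2body, dispT, hR hW, hR' hW, hN hW, hN' hW, hE hW, hEl hW,
      hEn hW, hEnl hW, hWs hW, hWl hW])

theorem traj_rfix_nil (f k) :
    Chain (entry W (.ret (.fix f k) [])) 5 (entry W (.ret k [])) := by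
  refine chain_cons ?_ (chain_cons ?_ (chain_cons ?_ (chain_cons ?_ (chain_cons ?_ (chain_end ?_)))))
  all_goals first
    | (simp [entry, m1, m2, m3, bodyN, bodyR, KV, CV, eL, eN, lConsT, natST, natZ, lNil,
      Proc.subst, Proc.lift, c2body, dispT, hR hW, hR' hW, hN hW, hN' hW, hE hW, hEl hW,
      hEn hW, hEnl hW, hWs hW, hWl hW]
       first | exact Shp.s1 _ _ | exact Shp.s2 _ _ _ | exact Shp.s3 _ _)
    | (simp [entry, m1, m2, m3, bodyN, bodyR, KV, CV, eL, eN, lConsT, natST, natZ, lNil,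
      Proc.subst, Proc.lift, c2body, dispT, hR hW, hR' hW, hN hW, hN' hW, hE hW, hEl hW,
      hEn hW, hEnl hW, hWs hW, hWl hW])

theorem traj_rfix_zero (f k t) :
    Chain (entry W (.ret (.fix f k) (0::t))) 9 (entry W (.ret k t)) := by
  refine chain_cons ?_ (chain_cons ?_ (chain_cons ?_ (chain_cons ?_ (chain_cons ?_ (chain_cons ?_ (chain_cons ?_ (chain_cons ?_ (chain_cons ?_ (chain_end ?_)))))))))
  all_goals first
    | (simp [entry, m1, m2, m3, bodyN, bodyR, KV, CV, eL, eN, lConsT, natST, natZ, lNil,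
      Proc.subst, Proc.lift, c2body, dispT, hR hW, hR' hW, hN hW, hN' hW, hE hW, hEl hW,
      hEn hW, hEnl hW, hWs hW, hWl hW]
       first | exact Shp.s1 _ _ | exact Shp.s2 _ _ _ | exact Shp.s3 _ _)
    | (simp [entry, m1, m2, m3, bodyN, bodyR, KV, CV, eL, eN, lConsT, natST, natZ, lNil,
      Proc.subst, Proc.lift, c2body, dispT, hR hW, hR' hW, hN hW, hN' hW, hE hW, hEl hW,
      hEn hW, hEnl hW, hWs hW, hWl hW])

theorem traj_rfix_succ (f k p t) :
    Chain (entry W (.ret (.fix f k) ((p+1)::t))) 10 (entry W (.normal f (.fix f k) t)) := by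
  refine chain_cons ?_ (chain_cons ?_ (chain_cons ?_ (chain_cons ?_ (chain_cons ?_ (chain_cons ?_ (chain_cons ?_ (chain_cons ?_ (chain_cons ?_ (chain_cons ?_ (chain_end ?_))))))))))
  all_goals first
    | (simp [entry, m1, m2, m3, bodyN, bodyR, KV, CV, eL, eN, lConsT, natST, natZ, lNil,
      Proc.subst, Proc.lift, c2body, dispT, hR hW, hR' hW, hN hW, hN' hW, hE hW, hEl hW,
      hEn hW, hEnl hW, hWs hW, hWl hW]
       first | exact Shp.s1 _ _ | exact Shp.s2 _ _ _ | exact Shp.s3 _ _)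
    | (simp [entry, m1, m2, m3, bodyN, bodyR, KV, CV, eL, eN, lConsT, natST, natZ, lNil,
      Proc.subst, Proc.lift, c2body, dispT, hR hW, hR' hW, hN hW, hN' hW, hE hW, hEl hW,
      hEn hW, hEnl hW, hWs hW, hWl hW])

end Traj2

section Master
variable {W : Proc} (hW : CA 0 W)
include hW

theorem traj {cfg cfg' : Cfg2} (h : step2 cfg = some cfg') :
    Chain (entry W cfg) (len cfg) (entry W cfg') := by
  cases cfg with
  | normal c k v =>
      cases c with
      | zero' => simp [step2] at h; subst h; exact traj_zero hW k v
      | succ =>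
          cases v with
          | nil => simp [step2] at h; subst h; exact traj_succ_nil hW k
          | cons a t => simp [step2] at h; subst h; exact traj_succ_cons hW k a t
      | tail =>
          cases v with
          | nil => simp [step2] at h; subst h; exact traj_tail_nil hW k
          | cons a t => simp [step2] at h; subst h; exact traj_tail_cons hW k a t
      | cons f fs => simp [step2] at h; subst h; exact traj_cons hW f fs k v
      | comp f g => simp [step2] at h; subst h; exact traj_comp hW f g k v
      | case f g =>
          cases v with
          | nil => simp [step2] at h; subst h; exact traj_case_nil hW f g k
          | cons a t =>
              cases a with
              | zero => simp [step2] at h; subst h; exact traj_case_zero hW f g k t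
              | succ p => simp [step2] at h; subst h; exact traj_case_succ hW f g k p t
      | fix f => simp [step2] at h; subst h; exact traj_fix hW f k v
  | ret k v =>
      cases k with
      | halt => simp [step2] at h; subst h; exact traj_rhalt hW v
      | cons₁ fs as k => simp [step2] at h; subst h; exact traj_rcons1 hW fs as k v
      | cons₂ ns k =>
          cases ns with
          | nil => simp [step2] at h; subst h; exact traj_rcons2_nil hW k v
          | cons n ns => simp [step2] at h; subst h; exact traj_rcons2_cons hW n ns k v
      | comp f k => simp [step2] at h; subst h; exact traj_rcomp hW f k v
      | fix f k =>
          cases v with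
          | nil => simp [step2] at h; subst h; exact traj_rfix_nil hW f k
          | cons a t =>
              cases a with
              | zero => simp [step2] at h; subst h; exact traj_rfix_zero hW f k t
              | succ p => simp [step2] at h; subst h; exact traj_rfix_succ hW f k p t
  | halt v => simp [step2] at h

end Master

theorem len_pos {cfg : Cfg2} (h : step2 cfg ≠ none) : 0 < len cfg := by
  cases cfg with
  | normal c k v => simp [len]
  | ret k v =>
      rcases k with _ | ⟨fs, as, k⟩ | ⟨ns, k⟩ | ⟨f, k⟩ | ⟨f, k⟩
      · simp [len, lenR]
      · simp [len, lenR]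
      · rcases ns with _ | ⟨n, ns⟩ <;> simp [len, lenR]
      · simp [len, lenR]
      · rcases v with _ | ⟨a, t⟩
        · simp [len, lenR]
        · rcases a with _ | p <;> simp [len, lenR]
  | halt v => exact absurd rfl h

def Reach2 : Cfg2 → Cfg2 → Prop := StateTransition.Reaches step2

/-- the configuration machine diverges from κ₀ -/
def Div (κ₀ : Cfg2) : Prop := ∀ cfg, Reach2 κ₀ cfg → step2 cfg ≠ none

theorem hdis {S : Proc} (h : ((S.fnames : Set Name) ∩ {hdN, cN} : Set Name) = ∅) :
    (0 : Name) ∉ S.fnames ∧ (1 : Name) ∉ S.fnames := by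
  constructor
  · intro hx
    have : (0 : Name) ∈ ((S.fnames : Set Name) ∩ {hdN, cN} : Set Name) :=
      ⟨by simpa using hx, by simp [hdN, cN]⟩
    simp [h] at this
  · intro hx
    have : (1 : Name) ∈ ((S.fnames : Set Name) ∩ {hdN, cN} : Set Name) :=
      ⟨by simpa using hx, by simp [hdN, cN]⟩
    simp [h] at this

/-- The candidate bisimulation (one orientation). -/
def Rel (κ₀ : Cfg2) (Wa Wb : Proc) (P Q : Proc) : Prop :=
  ∃ cfg i S, Reach2 κ₀ cfg ∧ i < len cfg ∧
    (0 : Name) ∉ S.fnames ∧ (1 : Name) ∉ S.fnames ∧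
    SCong P (.par (cnext^[i] (entry Wa cfg)) S) ∧
    SCong Q (.par (cnext^[i] (entry Wb cfg)) S)

section Bisim
variable {κ₀ : Cfg2} {Wa Wb : Proc}
  (hWa : CA 0 Wa) (hWb : CA 0 Wb) (hdiv : Div κ₀)

include hWa hWb hdiv

/-- clauses of the bisimulation for one orientation -/
theorem rel_clauses {P Q : Proc} (h : Rel κ₀ Wa Wb P Q) :
    (∀ α, StrongBarb ({hdN, cN} : Set Name) P α → StrongBarb ({hdN, cN} : Set Name) Q α) ∧
    (∀ S : Proc, ((S.fnames : Set Name) ∩ ({hdN, cN} : Set Name) = ∅) →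
      Rel κ₀ Wa Wb (.par P S) (.par Q S)) ∧
    (∀ P', Step P Label.tau P' → ∃ Q', Step Q Label.tau Q' ∧ Rel κ₀ Wa Wb P' Q') := by
  obtain ⟨cfg, i, S, hre, hi, h0, h1, hP, hQ⟩ := h
  obtain ⟨cfg', hcfg'⟩ : ∃ cfg', step2 cfg = some cfg' := by
    rcases hs : step2 cfg with _ | cfg'
    · exact absurd hs (hdiv cfg hre)
    · exact ⟨cfg', rfl⟩
  have chA := traj hWa hcfg'
  have chB := traj hWb hcfg'
  have shX : Shp (cnext^[i] (entry Wa cfg)) := chA.1 i hi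
  have shY : Shp (cnext^[i] (entry Wb cfg)) := chB.1 i hi
  refine ⟨?_, ?_, ?_⟩
  · -- barbs
    intro α hb
    have hb' := barb_scong hP hb
    rcases barb_par.1 hb' with h | h
    · exact absurd h (shp_barb shX α)
    · exact barb_scong hQ.symm (barb_par.2 (Or.inr h))
  · -- contexts
    intro S' hS'
    obtain ⟨g0, g1⟩ := hdis hS'
    refine ⟨cfg, i, .par S S', hre, hi, ?_, ?_, ?_, ?_⟩
    · simp [Proc.fnames]; exact ⟨h0, g0⟩
    · simp [Proc.fnames]; exact ⟨h1, g1⟩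
    · exact (SCong.parCong hP (SCong.refl _)).trans (SCong.parAssoc _ _ _)
    · exact (SCong.parCong hQ (SCong.refl _)).trans (SCong.parAssoc _ _ _)
  · -- τ-steps
    intro P' hstep
    have hstep' : Step (.par (cnext^[i] (entry Wa cfg)) S) .tau P' :=
      Step.struct hP.symm hstep (SCong.refl _)
    rcases par_inv shX h0 h1 hstep' with hsc | ⟨S', hS', hsc⟩
    · -- machine step
      have hQstep : Step Q .tau (.par (cnext (cnext^[i] (entry Wb cfg))) S) :=
        Step.struct hQ (Step.parL _ (shp_step shY)) (SCong.refl _)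
      have eA' : cnext^[i+1] (entry Wa cfg) = cnext (cnext^[i] (entry Wa cfg)) :=
        Function.iterate_succ_apply' cnext i (entry Wa cfg)
      have eB' : cnext^[i+1] (entry Wb cfg) = cnext (cnext^[i] (entry Wb cfg)) :=
        Function.iterate_succ_apply' cnext i (entry Wb cfg)
      rcases Nat.lt_or_ge (i+1) (len cfg) with hlt | hge
      · refine ⟨_, hQstep, cfg, i+1, S, hre, hlt, h0, h1, ?_, ?_⟩
        · rw [eA']; exact hsc
        · rw [eB']; exact SCong.refl _
      · have hieq : i + 1 = len cfg := Nat.le_antisymm (Nat.succ_le_of_lt hi) hge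
        have hre' : Reach2 κ₀ cfg' := Relation.ReflTransGen.tail hre hcfg'
        have hlen' : 0 < len cfg' := len_pos (hdiv cfg' hre')
        have eA : cnext (cnext^[i] (entry Wa cfg)) = entry Wa cfg' := by
          rw [← eA', hieq]; exact chA.2
        have eB : cnext (cnext^[i] (entry Wb cfg)) = entry Wb cfg' := by
          rw [← eB', hieq]; exact chB.2
        refine ⟨_, hQstep, cfg', 0, S, hre', hlen', h0, h1, ?_, ?_⟩
        · simpa [eA] using hsc
        · rw [Function.iterate_zero_apply, ← eB]; exact SCong.refl _
    · -- context step
      have hQstep : Step Q .tau (.par (cnext^[i] (entry Wb cfg)) S') :=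
        Step.struct hQ (Step.parR _ (step0_step hS')) (SCong.refl _)
      have hfn : S'.fnames ⊆ S.fnames := step0_fn hS'
      exact ⟨_, hQstep, cfg, i, S', hre, hi, fun hx => h0 (hfn hx), fun hx => h1 (hfn hx),
        hsc, SCong.refl _⟩

theorem bisim_main :
    IsStrongBarbedBisim ({hdN, cN} : Set Name)
      (fun P Q => Rel κ₀ Wa Wb P Q ∨ Rel κ₀ Wb Wa P Q) := by
  constructor
  · intro P Q h
    rcases h with ⟨cfg, i, S, a, b, c, d, e, f⟩ | ⟨cfg, i, S, a, b, c, d, e, f⟩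
    · exact Or.inr ⟨cfg, i, S, a, b, c, d, f, e⟩
    · exact Or.inl ⟨cfg, i, S, a, b, c, d, f, e⟩
  · intro P Q h
    rcases h with h | h
    · obtain ⟨c1, c2, c3⟩ := rel_clauses hWa hWb hdiv h
      exact ⟨c1, fun S hS => Or.inl (c2 S hS),
        fun P' hP' => (c3 P' hP').imp (fun Q' hq => ⟨hq.1, Or.inl hq.2⟩)⟩
    · obtain ⟨c1, c2, c3⟩ := rel_clauses hWb hWa hdiv h
      exact ⟨c1, fun S hS => Or.inr (c2 S hS),
        fun P' hP' => (c3 P' hP').imp (fun Q' hq => ⟨hq.1, Or.inr hq.2⟩)⟩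

theorem equiv_of_div :
    StrongBarbedEquiv ({hdN, cN} : Set Name) (entry Wa κ₀) (entry Wb κ₀) := by
  refine ⟨_, bisim_main hWa hWb hdiv, Or.inl ⟨κ₀, 0, .nil, Relation.ReflTransGen.refl,
    len_pos (hdiv κ₀ Relation.ReflTransGen.refl), ?_, ?_, ?_, ?_⟩⟩
  · simp [Proc.fnames]
  · simp [Proc.fnames]
  · exact (SCong.parNil _).symm
  · exact (SCong.parNil _).symm

end Bisim

/-! ### Halting implies inequivalence -/

theorem chain_tail {X Y : Proc} {n : ℕ} (h : Chain X (n+1) Y) :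
    Shp X ∧ Chain (cnext X) n Y := by
  refine ⟨h.1 0 (Nat.succ_pos n), fun i hi => ?_, ?_⟩
  · have := h.1 (i+1) (Nat.succ_lt_succ hi)
    rwa [Function.iterate_succ_apply] at this
  · have := h.2
    rwa [Function.iterate_succ_apply] at this

section Game
variable {R : Proc → Proc → Prop}
  (hR : IsStrongBarbedBisim ({hdN, cN} : Set Name) R)
include hR

/-- one micro-step of the bisimulation game -/
theorem game_step {P Q X Y : Proc} (hPQ : R P Q) (hP : SCong P X) (hQ : SCong Q Y)
    (hX : Shp X) (hY : Shp Y) :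
    ∃ Q', R (cnext X) Q' ∧ SCong Q' (cnext Y) := by
  have hstep : Step P .tau (cnext X) :=
    Step.struct hP (shp_step hX) (SCong.refl _)
  obtain ⟨Q', hQstep, hrel⟩ := (hR.2 P Q hPQ).2.2 _ hstep
  have : Step Y .tau Q' := Step.struct hQ.symm hQstep (SCong.refl _)
  exact ⟨Q', hrel, shp_tau hY this⟩

/-- playing the game along a chain of micro-steps -/
theorem game_chain : ∀ (n : ℕ) {X X' Y Y' P Q : Proc}, Chain X n X' → Chain Y n Y' →
    R P Q → SCong P X → SCong Q Y →
    ∃ P' Q', R P' Q' ∧ SCong P' X' ∧ SCong Q' Y' := by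
  intro n
  induction n with
  | zero =>
      intro X X' Y Y' P Q hX hY hPQ hP hQ
      exact ⟨P, Q, hPQ, hX.2 ▸ hP, hY.2 ▸ hQ⟩
  | succ n ih =>
      intro X X' Y Y' P Q hX hY hPQ hP hQ
      obtain ⟨sX, hX'⟩ := chain_tail hX
      obtain ⟨sY, hY'⟩ := chain_tail hY
      obtain ⟨Q', hrel, hQ'⟩ := game_step hR hPQ hP hQ sX sY
      exact ih hX' hY' hrel (SCong.refl _) hQ'

/-- playing the game along the machine run -/
theorem game_run {Wa Wb : Proc} (hWa : CA 0 Wa) (hWb : CA 0 Wb) :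
    ∀ {cfg cfgf : Cfg2}, Reach2 cfg cfgf →
    ∀ {P Q : Proc}, R P Q → SCong P (entry Wa cfg) → SCong Q (entry Wb cfg) →
    ∃ P' Q', R P' Q' ∧ SCong P' (entry Wa cfgf) ∧ SCong Q' (entry Wb cfgf) := by
  intro cfg cfgf hreach
  induction hreach using Relation.ReflTransGen.head_induction_on with
  | refl => intro P Q h hP hQ; exact ⟨P, Q, h, hP, hQ⟩
  | head hstep _ ih =>
      intro P Q h hP hQ
      rename_i c c' _
      have hst : step2 c = some c' := hstep
      obtain ⟨P', Q', hrel, hP', hQ'⟩ :=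
        game_chain hR (len c) (traj hWa hst) (traj hWb hst) h hP hQ
      exact ih hrel hP' hQ'

end Game

def Wflag : Proc := .out 2 .nil

theorem CA_Wflag : CA 0 Wflag := by simp [Wflag, CA]
theorem CA_nil : CA 0 (.nil : Proc) := trivial

/-- if the machine halts, the two processes are not equivalent -/
theorem nequiv_of_halt {κ₀ : Cfg2} {v : List ℕ} (hr : Reach2 κ₀ (.halt v)) :
    ¬ StrongBarbedEquiv ({hdN, cN} : Set Name) (entry Wflag κ₀) (entry .nil κ₀) := by
  rintro ⟨R, hR, hPQ⟩
  obtain ⟨P', Q', hrel, hP', hQ'⟩ :=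
    game_run hR CA_Wflag CA_nil hr hPQ (SCong.refl _) (SCong.refl _)
  -- P' ≡ out 2 nil, Q' ≡ nil
  have hbarbP : StrongBarb ({hdN, cN} : Set Name) P' (.outb 2) := by
    refine ⟨by simp [hdN, cN], .nil, .nil, ?_⟩
    exact Step.struct hP' (Step.outS 2 .nil) (SCong.refl _)
  have hbarbQ := (hR.2 P' Q' hrel).1 _ hbarbP
  have := barb_scong hQ' hbarbQ
  exact nil_no_barb this

/-! ### Relating `step2` to the mathlib ToPartrec machine -/

open Turing.ToPartrec in
def inj : Turing.ToPartrec.Cfg → Cfg2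
  | .halt v => .halt v
  | .ret k v => .ret k v

open Turing.ToPartrec in
theorem simA : ∀ (c : Code) (k : Cont) (v : List ℕ),
    StateTransition.Reaches₁ step2 (.normal c k v) (inj (stepNormal c k v)) := by
  intro c
  induction c with
  | zero' => intro k v; exact Relation.TransGen.single rfl
  | succ => intro k v; exact Relation.TransGen.single rfl
  | tail => intro k v; exact Relation.TransGen.single rfl
  | cons f fs ihf _ =>
      intro k v
      exact Relation.TransGen.head rfl (ihf _ v)
  | comp f g _ ihg =>
      intro k v
      exact Relation.TransGen.head rfl (ihg _ v)
  | case f g ihf ihg =>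
      intro k v
      rcases hv : v.headI with _ | n
      · rw [show stepNormal (f.case g) k v = stepNormal f k v.tail from by
          simp [stepNormal, hv]]
        refine Relation.TransGen.head ?_ (ihf k v.tail)
        show _ ∈ step2 _
        simp [step2, hv]
      · rw [show stepNormal (f.case g) k v = stepNormal g k (n :: v.tail) from by
          simp [stepNormal, hv]]
        refine Relation.TransGen.head ?_ (ihg k (n :: v.tail))
        show _ ∈ step2 _
        simp [step2, hv]
  | fix f ihf =>
      intro k v
      exact Relation.TransGen.head rfl (ihf _ v)

open Turing.ToPartrec in
theorem simB : ∀ (k : Cont) (v : List ℕ),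
    StateTransition.Reaches₁ step2 (.ret k v) (inj (stepRet k v)) := by
  intro k
  induction k with
  | halt => intro v; exact Relation.TransGen.single rfl
  | cons₁ fs as k _ => intro v; exact Relation.TransGen.head rfl (simA fs _ as)
  | cons₂ ns k ih => intro v; exact Relation.TransGen.head rfl (ih _)
  | comp f k _ => intro v; exact Relation.TransGen.head rfl (simA f k v)
  | fix f k ih =>
      intro v
      rcases hv : v.headI with _ | n
      · refine Relation.TransGen.head (b := Cfg2.ret k v.tail) ?_ ?_
        · show _ ∈ step2 _
          simp [step2, hv]
        · have := ih v.tail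
          rwa [show stepRet (Cont.fix f k) v = stepRet k v.tail by simp [stepRet, hv]]
      · refine Relation.TransGen.head (b := Cfg2.normal f (Cont.fix f k) v.tail) ?_ ?_
        · show _ ∈ step2 _
          simp [step2, hv]
        · have := simA f (Cont.fix f k) v.tail
          rwa [show stepRet (Cont.fix f k) v = stepNormal f (Cont.fix f k) v.tail by
            simp [stepRet, hv]]

open Turing.ToPartrec in
theorem respects : StateTransition.Respects Turing.ToPartrec.step step2
    (fun c1 c2 => c2 = inj c1) := by
  intro a₁ a₂ h
  subst h
  cases a₁ with
  | halt v => exact rfl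
  | ret k v => exact ⟨_, rfl, simB k v⟩

open Turing.ToPartrec in
theorem dom_iff_code (c : Code) (v : List ℕ) :
    (StateTransition.eval step2 (Cfg2.normal c .halt v)).Dom ↔ (c.eval v).Dom := by
  have h1 : StateTransition.eval step2 (Cfg2.normal c .halt v) =
      StateTransition.eval step2 (inj (stepNormal c .halt v)) :=
    StateTransition.reaches_eval (simA c .halt v).to_reflTransGen
  have h2 : (StateTransition.eval step2 (inj (stepNormal c .halt v))).Dom ↔
      (StateTransition.eval Turing.ToPartrec.step (stepNormal c .halt v)).Dom :=
    StateTransition.tr_eval_dom respects rfl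
  rw [h1, h2, stepNormal_eval, Part.map_eq_map]
  exact Iff.rfl

/-- divergence from non-domain -/
theorem div_of_not_dom {κ₀ : Cfg2} (h : ¬ (StateTransition.eval step2 κ₀).Dom) : Div κ₀ := by
  intro cfg hre hnone
  exact h (Part.dom_iff_mem.2 ⟨cfg, StateTransition.mem_eval.2 ⟨hre, hnone⟩⟩)

theorem halt_of_dom {κ₀ : Cfg2} (h : (StateTransition.eval step2 κ₀).Dom) :
    ∃ v, Reach2 κ₀ (.halt v) := by
  obtain ⟨b, hb⟩ := Part.dom_iff_mem.1 h
  obtain ⟨hre, hnone⟩ := StateTransition.mem_eval.1 hb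
  cases b with
  | normal c k v => cases c <;> simp [step2] at hnone
  | ret k v =>
      exfalso
      revert hnone
      rcases k with _ | ⟨fs, as, k⟩ | ⟨ns, k⟩ | ⟨f, k⟩ | ⟨f, k⟩ <;> simp [step2]
  | halt v => exact ⟨v, hre⟩

/-- The main characterization. -/
theorem equiv_iff_not_dom (κ₀ : Cfg2) :
    StrongBarbedEquiv ({hdN, cN} : Set Name) (entry Wflag κ₀) (entry .nil κ₀) ↔
      ¬ (StateTransition.eval step2 κ₀).Dom := by
  constructor
  · intro he hdom
    obtain ⟨v, hv⟩ := halt_of_dom hdom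
    exact nequiv_of_halt hv he
  · intro hnd
    exact equiv_of_div CA_Wflag CA_nil (div_of_not_dom hnd)

/-! ### The universal code -/

def U : ℕ →. ℕ := fun n => Nat.Partrec.Code.eval (Denumerable.ofNat Nat.Partrec.Code n) 0

theorem hU : Partrec U :=
  Nat.Partrec.Code.eval_part.comp (Computable.ofNat _) (Computable.const 0)

theorem exists_cU : ∃ c : Turing.ToPartrec.Code, ∀ n : ℕ,
    ((c.eval [n]).Dom ↔ (U n).Dom) := by
  have h1 : Nat.Partrec' (n := 1) (fun v => U v.head) := Nat.Partrec'.part_iff₁.2 hU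
  obtain ⟨c, hc⟩ := Turing.ToPartrec.Code.exists_code h1
  refine ⟨c, fun n => ?_⟩
  have h2 := hc ⟨[n], rfl⟩
  change c.eval [n] = pure <$> U n at h2
  rw [h2, Part.map_eq_map]
  exact Iff.rfl

/-! ### Computability of the encoding -/

def encStep (x : ℕ) : ℕ :=
  5 * Nat.pair 0 (5 * Nat.pair 1 (5 * Nat.pair (5 * Nat.pair 0 x + 4) 1 + 2) + 3) + 3

theorem enc_eN (n : ℕ) :
    encodeProc (eN n) = Nat.rec (motive := fun _ => ℕ)
      (encodeProc natZ) (fun _ ih => encStep ih) n := by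
  induction n with
  | zero => rfl
  | succ n ih =>
      have hr : (Nat.rec (motive := fun _ => ℕ)
          (encodeProc natZ) (fun _ ih => encStep ih) (n+1)) =
          encStep (Nat.rec (motive := fun _ => ℕ)
          (encodeProc natZ) (fun _ ih => encStep ih) n) := rfl
      rw [hr, ← ih]
      simp [eN, natST, encStep, encodeProc]

theorem pr_level1 (a b : ℕ) {g : ℕ → ℕ} (hg : Primrec g) :
    Primrec (fun x => 5 * Nat.pair a (g x) + b) :=
  Primrec.nat_add.comp
    (Primrec.nat_mul.comp (Primrec.const 5)
      (Primrec₂.natPair.comp (Primrec.const a) hg))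
    (Primrec.const b)

theorem pr_level2 (c b : ℕ) {g : ℕ → ℕ} (hg : Primrec g) :
    Primrec (fun x => 5 * Nat.pair (g x) c + b) :=
  Primrec.nat_add.comp
    (Primrec.nat_mul.comp (Primrec.const 5)
      (Primrec₂.natPair.comp hg (Primrec.const c)))
    (Primrec.const b)

theorem pr_encStep : Primrec encStep := by
  unfold encStep
  exact pr_level1 0 3 (pr_level1 1 3 (pr_level2 1 2 (pr_level1 0 4 Primrec.id)))

theorem pr_eEn : Primrec (fun n => encodeProc (eN n)) := by
  have : Primrec (fun n : ℕ => Nat.rec (motive := fun _ => ℕ)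
      (encodeProc natZ) (fun _ ih => encStep ih) n) := by
    refine (Primrec.nat_rec' (f := @id ℕ) (g := fun _ => encodeProc natZ)
      (h := fun _ p => encStep p.2) Primrec.id (Primrec.const _)
      ((pr_encStep.comp (Primrec.snd.comp Primrec.snd)).to₂)).of_eq fun n => rfl
  exact this.of_eq fun n => (enc_eN n).symm

def GG2 (a b x : ℕ) : ℕ :=
  5 * Nat.pair (5 * Nat.pair 0 a + 4)
    (5 * Nat.pair
      (5 * Nat.pair 1
        (5 * Nat.pair 0 (5 * Nat.pair 1 (5 * Nat.pair (5 * Nat.pair 0 x + 4)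
          (5 * Nat.pair (5 * Nat.pair 1 (encodeProc lNil) + 4) 1 + 2) + 2) + 3) + 3) + 4)
      (5 * Nat.pair 0 (5 * Nat.pair 1 b + 3) + 3) + 2) + 2

theorem enc_entry (W : Proc) (c : Turing.ToPartrec.Code) (n : ℕ) :
    encodeProc (entry W (.normal c .halt [n])) =
      GG2 (encodeProc (KV W .halt)) (encodeProc (bodyN W c)) (encodeProc (eN n)) := by
  simp only [entry, m2, eL, lConsT, encodeProc, GG2, lNil]

theorem comp_enc_entry (W : Proc) (c : Turing.ToPartrec.Code) :
    Computable (fun n => encodeProc (entry W (.normal c .halt [n]))) := by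
  have h1 : Primrec (fun n => GG2 (encodeProc (KV W .halt)) (encodeProc (bodyN W c))
      (encodeProc (eN n))) := by
    have : Primrec (GG2 (encodeProc (KV W .halt)) (encodeProc (bodyN W c))) := by
      unfold GG2
      exact pr_level1 (5 * Nat.pair 0 (encodeProc (KV W .halt)) + 4) 2
        (pr_level2 (5 * Nat.pair 0 (5 * Nat.pair 1 (encodeProc (bodyN W c)) + 3) + 3) 2
          (pr_level1 1 4 (pr_level1 0 3 (pr_level1 1 3
            (pr_level2 (5 * Nat.pair (5 * Nat.pair 1 (encodeProc lNil) + 4) 1 + 2) 2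
              (pr_level1 0 4 Primrec.id))))))
    exact this.comp pr_eEn
  exact (h1.of_eq fun n => (enc_entry W c n).symm).to_comp

end HOU
/-- Strong barbed equivalence is undecidable in HOcore with the two hidden names
`hd` and `c`: for any effective encoding `enc` of processes as natural numbers
(i.e., any injective encoding computably inter-translatable with the canonical
Gödel numbering), the set of codes of pairs of strongly barbed equivalent
processes is not computable. -/
theorem strong_barbed_equiv_undecidable
    (enc : Proc → ℕ) (henc : Function.Injective enc)
    (heff₁ : ∃ f : ℕ → ℕ, Computable f ∧ ∀ P, f (encodeProc P) = enc P)
    (heff₂ : ∃ g : ℕ → ℕ, Computable g ∧ ∀ P, g (enc P) = encodeProc P) :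
    ¬ ComputablePred (fun n : ℕ =>
        ∃ P Q : Proc, Nat.pair (enc P) (enc Q) = n ∧
          StrongBarbedEquiv ({hdN, cN} : Set Name) P Q) := by
  obtain ⟨f, hf, hfe⟩ := heff₁
  intro hD
  obtain ⟨cU, hcU⟩ := HOU.exists_cU
  set PP : ℕ → Proc := fun n => HOU.entry HOU.Wflag (.normal cU .halt [n]) with hPPdef
  set QQ : ℕ → Proc := fun n => HOU.entry .nil (.normal cU .halt [n]) with hQQdef
  have hchar : ∀ n, StrongBarbedEquiv ({hdN, cN} : Set Name) (PP n) (QQ n) ↔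
      ¬ (HOU.U n).Dom := by
    intro n
    rw [hPPdef, hQQdef]
    simp only []
    rw [HOU.equiv_iff_not_dom, HOU.dom_iff_code, hcU n]
  have hred : Computable (fun n => Nat.pair (f (encodeProc (PP n))) (f (encodeProc (QQ n)))) :=
    Primrec₂.natPair.to_comp.comp (hf.comp (HOU.comp_enc_entry _ cU))
      (hf.comp (HOU.comp_enc_entry _ cU))
  have hiff : ∀ n, (∃ P Q : Proc,
      Nat.pair (enc P) (enc Q) = Nat.pair (f (encodeProc (PP n))) (f (encodeProc (QQ n))) ∧
      StrongBarbedEquiv ({hdN, cN} : Set Name) P Q) ↔ ¬ (HOU.U n).Dom := by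
    intro n
    rw [hfe, hfe]
    constructor
    · rintro ⟨P, Q, hpq, he⟩
      obtain ⟨h1, h2⟩ := Nat.pair_eq_pair.1 hpq
      rw [henc h1, henc h2] at he
      exact (hchar n).1 he
    · intro h
      exact ⟨PP n, QQ n, rfl, (hchar n).2 h⟩
  obtain ⟨g, hg, hgp⟩ := ComputablePred.computable_iff.1 hD
  have hDom : ComputablePred fun n => (HOU.U n).Dom := by
    have h1 : ComputablePred fun n => ∃ P Q : Proc,
        Nat.pair (enc P) (enc Q) = Nat.pair (f (encodeProc (PP n))) (f (encodeProc (QQ n))) ∧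
        StrongBarbedEquiv ({hdN, cN} : Set Name) P Q := by
      refine ComputablePred.computable_iff.2
        ⟨fun n => g (Nat.pair (f (encodeProc (PP n))) (f (encodeProc (QQ n)))),
          hg.comp hred, ?_⟩
      funext n
      exact congrFun hgp _
    have h2 := (h1.of_eq hiff).not
    exact h2.of_eq fun n => not_not
  obtain ⟨h, hcomp, heq⟩ := ComputablePred.computable_iff.1 hDom
  have h3 : ComputablePred fun c : Nat.Partrec.Code => (Nat.Partrec.Code.eval c 0).Dom := by
    refine ComputablePred.computable_iff.2
      ⟨fun c => h (Encodable.encode c), hcomp.comp Computable.encode, ?_⟩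
    funext c
    have hc : HOU.U (Encodable.encode c) = Nat.Partrec.Code.eval c 0 := by
      simp [HOU.U, Denumerable.ofNat_encode]
    have := congrFun heq (Encodable.encode c)
    rw [← hc]
    exact this
  exact ComputablePred.halting_problem 0 h3
end

section
/- Every closed de Bruijn term can be generated by the AB machine with its canonical flag sequence: for every closed term t' and every closure (t, e), the AB machine admits the run <0 | <> | (t, e)>_ind -Seq(t')-> <t | (t',<>)::e | []>. -/
/-! ### The environment-based KAM and the AB machine (de Bruijn indices) -/

/-- Lambda-terms with de Bruijn indices. -/
inductive DTm
  | var : ℕ → DTm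
  | lam : DTm → DTm
  | app : DTm → DTm → DTm
  deriving DecidableEq

/-- Closures: a term together with an environment (a list of closures). -/
inductive Clos
  | mk : DTm → List Clos → Clos

/-- All de Bruijn indices point below `k`. -/
def DClosedUnder : ℕ → DTm → Prop
  | k, .var n => n < k
  | k, .lam t => DClosedUnder (k + 1) t
  | k, .app t s => DClosedUnder k t ∧ DClosedUnder k s

/-- Closed closures: the environment has more elements than the highest free
de Bruijn index of the term, and consists only of closed closures. -/
inductive ClosClosed : Clos → Prop
  | mk {t : DTm} {e : List Clos} :
      DClosedUnder e.length t → (∀ γ ∈ e, ClosClosed γ) → ClosClosed (.mk t e)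

/-- Configurations of the AB machine: evaluation mode `<t | e | π>`,
index mode `<n | ρ | γ>_ind, and term mode `<t | m | ρ | γ>_tm`. -/
inductive ABConf
  | ev : DTm → List Clos → List Clos → ABConf
  | ind : ℕ → List (DTm × ℕ) → Clos → ABConf
  | tm : DTm → ℕ → List (DTm × ℕ) → Clos → ABConf

/-- Flags of the AB machine. -/
inductive ABFlag
  | arg | suc | var | lam | appfun | app | done
  deriving DecidableEq

/-- Labels of the AB machine. -/
inductive ABLabel
  | tau : ABLabel
  | flag : ABFlag → ABLabel

/-- Transitions of the AB machine. -/
inductive ABStep : ABConf → ABLabel → ABConf → Prop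
  | push {t s e π} : ABStep (.ev (.app t s) e π) .tau (.ev t e (.mk s e :: π))
  | zero {t e e' π} : ABStep (.ev (.var 0) (.mk t e :: e') π) .tau (.ev t e π)
  | env {n γ e π} : ABStep (.ev (.var (n + 1)) (γ :: e) π) .tau (.ev (.var n) e π)
  | grab {t e γ π} : ABStep (.ev (.lam t) e (γ :: π)) .tau (.ev t (γ :: e) π)
  | arg {t e} : ABStep (.ev (.lam t) e []) (.flag .arg) (.ind 0 [] (.mk t e))
  | suc {n ρ γ} : ABStep (.ind n ρ γ) (.flag .suc) (.ind (n + 1) ρ γ)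
  | var {n ρ γ} : ABStep (.ind n ρ γ) (.flag .var) (.tm (.var n) (n + 1) ρ γ)
  | lamS {t m ρ γ} : ABStep (.tm t (m + 1) ρ γ) (.flag .lam) (.tm (.lam t) m ρ γ)
  | lam0 {t ρ γ} : ABStep (.tm t 0 ρ γ) (.flag .lam) (.tm (.lam t) 0 ρ γ)
  | appfun {t m ρ γ} : ABStep (.tm t m ρ γ) (.flag .appfun) (.ind 0 ((t, m) :: ρ) γ)
  | appS {s m1 t m2 ρ γ} :
      ABStep (.tm s m1 ((t, m2) :: ρ) γ) (.flag .app) (.tm (.app t s) (max m1 m2) ρ γ)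
  | restart {t s e} :
      ABStep (.tm t 0 [] (.mk s e)) (.flag .done) (.ev s (.mk t [] :: e) [])

/-- Silent transitions of the AB machine. -/
def ABTau (C C' : ABConf) : Prop := ABStep C .tau C'

/-- Flagged transitions of the AB machine. -/
def ABFlagStep (C : ABConf) (F : ABFlag) (C' : ABConf) : Prop := ABStep C (.flag F) C'

/-! ### Statement 13: the AB machine generates every closed term -/

/-- The canonical flag sequence of a term (without the final `done`). -/
def FSeq' : DTm → List ABFlag
  | .var n => List.replicate n .suc ++ [.var]
  | .app t s => FSeq' t ++ [.appfun] ++ FSeq' s ++ [.app]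
  | .lam t => FSeq' t ++ [.lam]

/-- The canonical flag sequence of a term. -/
def FSeq (t : DTm) : List ABFlag := FSeq' t ++ [.done]

/-- A run of the AB machine through a given sequence of flagged transitions. -/
inductive FlagRun : ABConf → List ABFlag → ABConf → Prop
  | nil {C} : FlagRun C [] C
  | cons {C C' C'' F l} :
      ABStep C (.flag F) C' → FlagRun C' l C'' → FlagRun C (F :: l) C''

def mfun : DTm → ℕ
  | .var n => n + 1
  | .lam t => mfun t - 1
  | .app t s => max (mfun t) (mfun s)

theorem mfun_le {k : ℕ} {t : DTm} (h : DClosedUnder k t) : mfun t ≤ k := by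
  induction t generalizing k with
  | var n => exact h
  | lam t ih =>
    have := ih h
    simp [mfun]; omega
  | app t s iht ihs =>
    exact max_le (iht h.1) (ihs h.2)

theorem FlagRun.append {C C' C'' l l'} (h : FlagRun C l C') (h' : FlagRun C' l' C'') :
    FlagRun C (l ++ l') C'' := by
  induction h with
  | nil => exact h'
  | cons s _ ih => exact .cons s (ih h')

theorem run_suc (n m : ℕ) (ρ : List (DTm × ℕ)) (γ : Clos) :
    FlagRun (.ind m ρ γ) (List.replicate n .suc) (.ind (m + n) ρ γ) := by
  induction n generalizing m with
  | zero => exact .nil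
  | succ k ihk =>
    refine .cons ABStep.suc ?_
    simpa [Nat.add_comm, Nat.add_assoc, Nat.add_left_comm] using ihk (m + 1)

theorem run_seq' (t : DTm) (ρ : List (DTm × ℕ)) (γ : Clos) :
    FlagRun (.ind 0 ρ γ) (FSeq' t) (.tm t (mfun t) ρ γ) := by
  induction t generalizing ρ with
  | var n =>
    simpa [FSeq', mfun] using (run_suc n 0 ρ γ).append (.cons ABStep.var .nil)
  | lam t ih =>
    refine (ih ρ).append ?_
    cases hm : mfun t with
    | zero =>
      have : mfun (DTm.lam t) = 0 := by simp [mfun, hm]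
      rw [this]; exact .cons ABStep.lam0 .nil
    | succ m =>
      have : mfun (DTm.lam t) = m := by simp [mfun, hm]
      rw [this]; exact .cons ABStep.lamS .nil
  | app t s iht ihs =>
    rw [show FSeq' (DTm.app t s) = FSeq' t ++ ([.appfun] ++ (FSeq' s ++ [.app])) by simp [FSeq']]
    refine (iht ρ).append (.cons ABStep.appfun ?_)
    refine (ihs ((t, mfun t) :: ρ)).append (.cons ABStep.appS ?_)
    have : max (mfun s) (mfun t) = mfun (DTm.app t s) := by simp [mfun, Nat.max_comm]
    rw [this]; exact .nil

/-- Every closed term `t'` is generated by the AB machine with its canonical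
flag sequence: `<0 | <> | (t, e)>_ind -FSeq(t')-> <t | (t', <>)::e | []>`. -/
theorem ab_machine_generates_every_closed_term
    (t' : DTm) (h : DClosedUnder 0 t') (t : DTm) (e : List Clos) :
    FlagRun (.ind 0 [] (.mk t e)) (FSeq t') (.ev t (.mk t' [] :: e) []) := by
  have h0 : mfun t' = 0 := Nat.le_zero.mp (mfun_le h)
  have := run_seq' t' [] (.mk t e)
  rw [h0] at this
  exact this.append (.cons ABStep.restart .nil)
end

section
/- Applicative bisimilarity coincides with machine bisimilarity of AB machines: for all closed closures (t, e) and (s, d), (t, e) ~app (s, d) if and only if <t | e | []> ~m <s | d | []>. -/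
/-! ### Machine bisimilarity for flagged abstract machines -/

/-- Machine bisimulation for a flagged abstract machine given by silent steps
`tstep`, flagged steps `fstep`, and terminating flagged transitions `final`. -/
def IsMachineBisim {Conf Fl : Type} (tstep : Conf → Conf → Prop)
    (fstep : Conf → Fl → Conf → Prop) (final : Conf → Fl → Prop)
    (R : Conf → Conf → Prop) : Prop :=
  Symmetric R ∧ ∀ C1 C2, R C1 C2 →
    (∀ (F : Fl) (C1' : Conf),
        (∃ C, Relation.ReflTransGen tstep C1 C ∧ fstep C F C1') →
        ∃ C2', (∃ C, Relation.ReflTransGen tstep C2 C ∧ fstep C F C2') ∧ R C1' C2') ∧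
    (∀ F : Fl, (∃ C, Relation.ReflTransGen tstep C1 C ∧ final C F) →
        ∃ C, Relation.ReflTransGen tstep C2 C ∧ final C F)

/-- Machine bisimilarity: the largest machine bisimulation. -/
def MachineBisim {Conf Fl : Type} (tstep : Conf → Conf → Prop)
    (fstep : Conf → Fl → Conf → Prop) (final : Conf → Fl → Prop)
    (C1 C2 : Conf) : Prop :=
  ∃ R, IsMachineBisim tstep fstep final R ∧ R C1 C2

/-! ### Statement 14: applicative bisimilarity coincides with machine bisimilarity -/

/-- Applicative bisimulation (a symmetric relation on closed closures). -/
def IsAppBisim (R : Clos → Clos → Prop) : Prop :=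
  Symmetric R ∧ (∀ γ δ, R γ δ → ClosClosed γ ∧ ClosClosed δ) ∧
  ∀ t e s d, R (.mk t e) (.mk s d) →
    ∀ t' e', Relation.ReflTransGen ABTau (.ev t e []) (.ev (.lam t') e' []) →
      ∃ s' d', Relation.ReflTransGen ABTau (.ev s d []) (.ev (.lam s') d' []) ∧
        ∀ t'' : DTm, DClosedUnder 0 t'' →
          R (.mk t' (.mk t'' [] :: e')) (.mk s' (.mk t'' [] :: d'))

/-- Applicative bisimilarity: the largest applicative bisimulation. -/
def AppBisim (γ δ : Clos) : Prop := ∃ R, IsAppBisim R ∧ R γ δ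

/-- The AB machine has no terminating flagged transitions. -/
def ABFinal : ABConf → ABFlag → Prop := fun _ _ => False

/-! ### Auxiliary development -/

open Relation

abbrev MB := MachineBisim ABTau ABFlagStep ABFinal

/-- Machine bisimilarity is itself a machine bisimulation. -/
lemma mb_isBisim {Conf Fl : Type} (tstep : Conf → Conf → Prop)
    (fstep : Conf → Fl → Conf → Prop) (final : Conf → Fl → Prop) :
    IsMachineBisim tstep fstep final (MachineBisim tstep fstep final) := by
  constructor
  · rintro C1 C2 ⟨R, hR, h⟩
    exact ⟨R, hR, hR.1 h⟩
  · rintro C1 C2 ⟨R, hR, h⟩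
    refine ⟨fun F C1' h1 => ?_, fun F h1 => ((hR.2 C1 C2 h).2 F h1)⟩
    obtain ⟨C2', h2, h12⟩ := (hR.2 C1 C2 h).1 F C1' h1
    exact ⟨C2', h2, R, hR, h12⟩

lemma no_tau_ind {n ρ γ C} : ¬ ABTau (.ind n ρ γ) C := by intro h; cases h
lemma no_tau_tm {t m ρ γ C} : ¬ ABTau (.tm t m ρ γ) C := by intro h; cases h

lemma taustar_eq_of_no_tau {C C'} (hn : ∀ D, ¬ ABTau C D)
    (h : ReflTransGen ABTau C C') : C' = C := by
  rcases h.cases_head with h | ⟨D, hD, _⟩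
  · exact h.symm
  · exact absurd hD (hn D)

/-- Flagged steps are deterministic. -/
lemma fstep_det {C F C1 C2} (h1 : ABFlagStep C F C1) (h2 : ABFlagStep C F C2) :
    C1 = C2 := by
  cases h1 <;> cases h2 <;> rfl

/-- A tau step from an `ev` configuration goes to an `ev` configuration. -/
lemma tau_tgt_ev {C C'} (h : ABTau C C') : ∃ u e π, C' = .ev u e π := by
  cases h <;> exact ⟨_, _, _, rfl⟩

lemma taustar_ev {t e π C} (h : ReflTransGen ABTau (.ev t e π) C) :
    ∃ u e' π', C = .ev u e' π' := by
  induction h with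
  | refl => exact ⟨_, _, _, rfl⟩
  | tail _ h2 _ => exact tau_tgt_ev h2

/-- Flagged steps from `ev` configurations: only `arg`. -/
lemma fstep_ev {u e π F C'} (h : ABFlagStep (.ev u e π) F C') :
    ∃ t', u = .lam t' ∧ π = [] ∧ F = .arg ∧ C' = .ind 0 [] (.mk t' e) := by
  cases h; exact ⟨_, rfl, rfl, rfl, rfl⟩

/-- One-step transport of machine bisimilarity at tau-free sources. -/
lemma mb_step' {C1 C2 F C1' C2'} (h : MB C1 C2) (hnt : ∀ D, ¬ ABTau C2 D)
    (h1 : ABFlagStep C1 F C1') (h2 : ABFlagStep C2 F C2') : MB C1' C2' := by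
  obtain ⟨R, hR, h12⟩ := h
  obtain ⟨C2'', ⟨C, htau, hf⟩, hR'⟩ := (hR.2 C1 C2 h12).1 F C1' ⟨C1, .refl, h1⟩
  rw [taustar_eq_of_no_tau hnt htau] at hf
  rw [fstep_det h2 hf]
  exact ⟨R, hR, hR'⟩

/-- The counter needed to generate a term. -/
def need : DTm → ℕ
  | .var n => n + 1
  | .lam t => need t - 1
  | .app t s => max (need s) (need t)

lemma dclosed_iff_need (t : DTm) : ∀ k, DClosedUnder k t ↔ need t ≤ k := by
  induction t with
  | var n => intro k; simp [DClosedUnder, need]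
  | lam t ih => intro k; simp only [DClosedUnder, need, ih]; omega
  | app t s iht ihs =>
      intro k; simp only [DClosedUnder, need, iht, ihs, max_le_iff]; tauto

lemma dclosed_mono {t k k'} (h : DClosedUnder k t) (hk : k ≤ k') : DClosedUnder k' t :=
  (dclosed_iff_need t k').2 (le_trans ((dclosed_iff_need t k).1 h) hk)

lemma mb_ind_succ {n ρ γ1 γ2} (h : MB (.ind n ρ γ1) (.ind n ρ γ2)) :
    MB (.ind (n+1) ρ γ1) (.ind (n+1) ρ γ2) :=
  mb_step' h (fun _ => no_tau_ind) ABStep.suc ABStep.suc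

lemma mb_ind_iter {ρ γ1 γ2} (h : MB (.ind 0 ρ γ1) (.ind 0 ρ γ2)) :
    ∀ n, MB (.ind n ρ γ1) (.ind n ρ γ2) := by
  intro n; induction n with
  | zero => exact h
  | succ n ih => exact mb_ind_succ ih

/-- Transport of machine bisimilarity along the generation of a term. -/
lemma gen_mb (t : DTm) : ∀ ρ γ1 γ2, MB (.ind 0 ρ γ1) (.ind 0 ρ γ2) →
    MB (.tm t (need t) ρ γ1) (.tm t (need t) ρ γ2) := by
  induction t with
  | var n =>
      intro ρ γ1 γ2 h
      exact mb_step' (mb_ind_iter h n) (fun _ => no_tau_ind) ABStep.var ABStep.var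
  | lam t ih =>
      intro ρ γ1 γ2 h
      have h1 := ih ρ γ1 γ2 h
      show MB (.tm (.lam t) (need t - 1) ρ γ1) (.tm (.lam t) (need t - 1) ρ γ2)
      cases h0 : need t with
      | zero =>
          rw [h0] at h1
          simpa using mb_step' h1 (fun _ => no_tau_tm) ABStep.lam0 ABStep.lam0
      | succ m =>
          rw [h0] at h1
          simpa using mb_step' h1 (fun _ => no_tau_tm) ABStep.lamS ABStep.lamS
  | app t1 t2 ih1 ih2 =>
      intro ρ γ1 γ2 h
      have ha := mb_step' (ih1 ρ γ1 γ2 h) (fun _ => no_tau_tm) ABStep.appfun ABStep.appfun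
      have hb := ih2 ((t1, need t1) :: ρ) γ1 γ2 ha
      exact mb_step' hb (fun _ => no_tau_tm) ABStep.appS ABStep.appS

/-! ### Closedness preservation along tau steps -/

def EvClosed : ABConf → Prop
  | .ev t e π => DClosedUnder e.length t ∧ (∀ γ ∈ e, ClosClosed γ) ∧ (∀ γ ∈ π, ClosClosed γ)
  | _ => False

lemma tau_pres_closed {C C'} (h : ABTau C C') (hc : EvClosed C) : EvClosed C' := by
  cases h with
  | push =>
      obtain ⟨⟨h1, h2⟩, he, hπ⟩ := hc
      refine ⟨h1, he, fun γ hγ => ?_⟩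
      cases hγ with
      | head => exact ClosClosed.mk h2 he
      | tail _ hγ => exact hπ _ hγ
  | zero =>
      obtain ⟨h1, he, hπ⟩ := hc
      have hh := he _ List.mem_cons_self
      cases hh with
      | mk h2 h3 => exact ⟨h2, h3, hπ⟩
  | env =>
      obtain ⟨h1, he, hπ⟩ := hc
      refine ⟨?_, fun γ hγ => he γ (List.mem_cons_of_mem _ hγ), hπ⟩
      simp only [DClosedUnder, List.length_cons] at h1 ⊢
      omega
  | grab =>
      obtain ⟨h1, he, hπ⟩ := hc
      refine ⟨h1, fun γ hγ => ?_, fun γ hγ => hπ _ (List.mem_cons_of_mem _ hγ)⟩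
      cases hγ with
      | head => exact hπ _ List.mem_cons_self
      | tail _ hγ => exact he _ hγ

lemma taustar_pres_closed {C C'} (h : ReflTransGen ABTau C C') (hc : EvClosed C) :
    EvClosed C' := by
  induction h with
  | refl => exact hc
  | tail _ h2 ih => exact tau_pres_closed h2 ih

lemma closClosed_evClosed {t e} (h : ClosClosed (.mk t e)) : EvClosed (.ev t e []) := by
  cases h with
  | mk h1 h2 => exact ⟨h1, h2, by simp⟩

/-! ### Direction 1: applicative bisim gives a machine bisim -/

inductive SRel (R : Clos → Clos → Prop) : ABConf → ABConf → Prop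
  | ev {t e s d} : R (.mk t e) (.mk s d) → SRel R (.ev t e []) (.ev s d [])
  | ind {n ρ t' e' s' d'} :
      (∀ t'', DClosedUnder 0 t'' →
        R (.mk t' (.mk t'' [] :: e')) (.mk s' (.mk t'' [] :: d'))) →
      (∀ p ∈ ρ, DClosedUnder p.2 p.1) →
      SRel R (.ind n ρ (.mk t' e')) (.ind n ρ (.mk s' d'))
  | tm {u m ρ t' e' s' d'} :
      (∀ t'', DClosedUnder 0 t'' →
        R (.mk t' (.mk t'' [] :: e')) (.mk s' (.mk t'' [] :: d'))) →
      (∀ p ∈ ρ, DClosedUnder p.2 p.1) → DClosedUnder m u →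
      SRel R (.tm u m ρ (.mk t' e')) (.tm u m ρ (.mk s' d'))

lemma srel_isBisim {R} (hR : IsAppBisim R) :
    IsMachineBisim ABTau ABFlagStep ABFinal (SRel R) := by
  obtain ⟨hsym, hcl, happ⟩ := hR
  constructor
  · intro C1 C2 h
    cases h with
    | ev h => exact SRel.ev (hsym h)
    | ind h hρ => exact SRel.ind (fun t'' ht'' => hsym (h t'' ht'')) hρ
    | tm h hρ hu => exact SRel.tm (fun t'' ht'' => hsym (h t'' ht'')) hρ hu
  · intro C1 C2 hS
    refine ⟨?_, ?_⟩
    swap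
    · rintro F ⟨C, -, hfin⟩
      exact hfin.elim
    rintro F C1' ⟨C, htau, hf⟩
    cases hS with
    | @ev t e s d h =>
        obtain ⟨u, e2, π2, rfl⟩ := taustar_ev htau
        obtain ⟨t', rfl, rfl, rfl, rfl⟩ := fstep_ev hf
        obtain ⟨s', d', htau2, hR2⟩ := happ t e s d h t' e2 htau
        refine ⟨.ind 0 [] (.mk s' d'), ⟨.ev (.lam s') d' [], htau2, ABStep.arg⟩, ?_⟩
        exact SRel.ind hR2 (by simp)
    | @ind n ρ t' e' s' d' h hρ =>
        rw [taustar_eq_of_no_tau (fun _ => no_tau_ind) htau] at hf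
        cases hf with
        | suc =>
            exact ⟨_, ⟨_, .refl, ABStep.suc⟩, SRel.ind h hρ⟩
        | var =>
            refine ⟨_, ⟨_, .refl, ABStep.var⟩, SRel.tm h hρ ?_⟩
            simp [DClosedUnder]
    | @tm u m ρ t' e' s' d' h hρ hu =>
        rw [taustar_eq_of_no_tau (fun _ => no_tau_tm) htau] at hf
        cases hf with
        | lamS =>
            refine ⟨_, ⟨_, .refl, ABStep.lamS⟩, SRel.tm h hρ ?_⟩
            exact hu
        | lam0 =>
            refine ⟨_, ⟨_, .refl, ABStep.lam0⟩, SRel.tm h hρ ?_⟩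
            show DClosedUnder 1 u
            exact dclosed_mono hu (by omega)
        | appfun =>
            refine ⟨_, ⟨_, .refl, ABStep.appfun⟩, SRel.ind h ?_⟩
            intro p hp
            cases hp with
            | head => exact hu
            | tail _ hp => exact hρ _ hp
        | @appS _ _ t2 m2 ρ' _ =>
            refine ⟨_, ⟨_, .refl, ABStep.appS⟩, SRel.tm h (fun p hp => hρ _ (List.mem_cons_of_mem _ hp)) ?_⟩
            constructor
            · exact dclosed_mono (hρ (t2, m2) List.mem_cons_self) (le_max_right _ _)
            · exact dclosed_mono hu (le_max_left _ _)
        | restart =>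
            refine ⟨_, ⟨_, .refl, ABStep.restart⟩, SRel.ev (h u hu)⟩

/-! ### Direction 2: machine bisim gives an applicative bisim -/

def closEv : Clos → ABConf
  | .mk t e => .ev t e []

def R2 : Clos → Clos → Prop :=
  fun γ δ => ClosClosed γ ∧ ClosClosed δ ∧ MB (closEv γ) (closEv δ)

lemma r2_isAppBisim : IsAppBisim R2 := by
  refine ⟨fun γ δ ⟨h1, h2, h3⟩ => ⟨h2, h1, (mb_isBisim _ _ _).1 h3⟩,
    fun γ δ h => ⟨h.1, h.2.1⟩, ?_⟩
  rintro t e s d ⟨hct, hcs, hmb⟩ t' e' htau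
  obtain ⟨R, hR, h12⟩ := hmb
  obtain ⟨C2', ⟨C, htau2, hf2⟩, hR'⟩ :=
    (hR.2 _ _ h12).1 ABFlag.arg (.ind 0 [] (.mk t' e'))
      ⟨.ev (.lam t') e' [], htau, ABStep.arg⟩
  obtain ⟨u, e2, π2, rfl⟩ := taustar_ev htau2
  obtain ⟨s', rfl, rfl, _, rfl⟩ := fstep_ev hf2
  refine ⟨s', e2, htau2, ?_⟩
  intro t'' ht''
  have hmb' : MB (.ind 0 [] (.mk t' e')) (.ind 0 [] (.mk s' e2)) := ⟨R, hR, hR'⟩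
  have hgen := gen_mb t'' [] (.mk t' e') (.mk s' e2) hmb'
  have h0 : need t'' = 0 := Nat.le_zero.mp ((dclosed_iff_need t'' 0).1 ht'')
  rw [h0] at hgen
  have hdone : MB (.ev t' (.mk t'' [] :: e') []) (.ev s' (.mk t'' [] :: e2) []) :=
    mb_step' hgen (fun _ => no_tau_tm) ABStep.restart ABStep.restart
  -- closedness of the new closures
  have hc1 : EvClosed (.ev (.lam t') e' []) :=
    taustar_pres_closed htau (closClosed_evClosed hct)
  have hc2 : EvClosed (.ev (.lam s') e2 []) :=
    taustar_pres_closed htau2 (closClosed_evClosed hcs)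
  obtain ⟨hd1, he1, -⟩ := hc1
  obtain ⟨hd2, he2, -⟩ := hc2
  have hclt'' : ClosClosed (.mk t'' ([] : List Clos)) := ClosClosed.mk ht'' (by simp)
  refine ⟨ClosClosed.mk ?_ ?_, ClosClosed.mk ?_ ?_, hdone⟩
  · simpa [DClosedUnder] using hd1
  · intro γ hγ
    cases hγ with
    | head => exact hclt''
    | tail _ hγ => exact he1 _ hγ
  · simpa [DClosedUnder] using hd2
  · intro γ hγ
    cases hγ with
    | head => exact hclt''
    | tail _ hγ => exact he2 _ hγ

/-- For closed closures, `(t, e) ~app (s, d)` iff `<t | e | []> ~m <s | d | []>`. -/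
theorem app_bisim_iff_machine_bisim (t s : DTm) (e d : List Clos)
    (ht : ClosClosed (.mk t e)) (hs : ClosClosed (.mk s d)) :
    AppBisim (.mk t e) (.mk s d) ↔
      MachineBisim ABTau ABFlagStep ABFinal (.ev t e []) (.ev s d []) := by
  constructor
  · rintro ⟨R, hR, h⟩
    exact ⟨SRel R, srel_isBisim hR, SRel.ev h⟩
  · intro hmb
    exact ⟨R2, r2_isAppBisim, ht, hs, hmb⟩
end
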